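/- arXiv:2311.00779 — 3 statements merged into one kernel-verified Lean document; each statement's English description precedes it below -/
import Mathlib

section
/- Let H = ([n], 𝓔) be a hypergraph and let P_H be its hypergraphic polytope. Then the map sending an acyclic orientation h of H to the vector (|{e ∈ 𝓔 : h(e) = v}|)_{v∈[n]} ∈ ℝⁿ is a bijection from the set of acyclic orientations of H onto the set of vertices of P_H; moreover, two vertices x, y of P_H corresponding to acyclic orientations h₁, h₂ are adjacent on the skeleton of P_H if and only if there exists a pair {u, v} of distinct vertices of H such that h₁ and h₂ can be obtained from each other by flipping {u, v}. -/
/-!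
A hypergraph on vertex type `V` is given by a finite collection `𝓔` of nonempty
hyperedges (finsets of `V`).  An orientation assigns to each hyperedge a head
belonging to it.  `Arc 𝓔 h u v` is the arc relation of the digraph `D_h`, and an
orientation is acyclic if `D_h` has no directed cycle.  `flip 𝓔 h u v` is the
orientation `h^{(u,v)}`, and `(u, v)` is flippable in `h` if `h^{(u,v)}` is acyclic.
-/

namespace PaperFlip

variable {V : Type*} [DecidableEq V]

/-- The hyperedges of a hypergraph, viewed as a subtype. -/
abbrev Edge (𝓔 : Finset (Finset V)) := {e : Finset V // e ∈ 𝓔}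

/-- `h` is an orientation: the head of every hyperedge belongs to it. -/
def IsOrientation (𝓔 : Finset (Finset V)) (h : Edge 𝓔 → V) : Prop :=
  ∀ e : Edge 𝓔, h e ∈ e.1

/-- The arc relation of the digraph `D_h`: there is an arc from `u` to `v` iff some
hyperedge `e` has head `v` and contains `u` as a different vertex. -/
def Arc (𝓔 : Finset (Finset V)) (h : Edge 𝓔 → V) (u v : V) : Prop :=
  ∃ e : Edge 𝓔, h e = v ∧ u ∈ e.1 ∧ u ≠ v

/-- An acyclic orientation: an orientation whose digraph `D_h` has no directed cycle. -/
def IsAcyclic (𝓔 : Finset (Finset V)) (h : Edge 𝓔 → V) : Prop :=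
  IsOrientation 𝓔 h ∧ ∀ v : V, ¬ Relation.TransGen (Arc 𝓔 h) v v

/-- The orientation `h^{(u,v)}`: every hyperedge containing both `u` and `v` whose
head is `u` gets the new head `v`; all other heads are unchanged. -/
def flip (𝓔 : Finset (Finset V)) (h : Edge 𝓔 → V) (u v : V) : Edge 𝓔 → V :=
  fun e => if u ∈ e.1 ∧ v ∈ e.1 ∧ h e = u then v else h e

/-- The ordered pair `(u, v)` of distinct vertices is flippable in `h` if `h^{(u,v)}`
is acyclic. -/
def Flippable (𝓔 : Finset (Finset V)) (h : Edge 𝓔 → V) (u v : V) : Prop :=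
  u ≠ v ∧ IsAcyclic 𝓔 (flip 𝓔 h u v)

/-- The submodular function `f_H(U) = |{e ∈ 𝓔 : U ∩ e ≠ ∅}|` of a hypergraph on `[n]`. -/
def fH (n : ℕ) (𝓔 : Finset (Finset (Fin n))) (U : Finset (Fin n)) : ℝ :=
  ((𝓔.filter fun e => (U ∩ e).Nonempty).card : ℝ)

/-- The hypergraphic polytope `P_H ⊆ ℝⁿ` of a hypergraph `H = ([n], 𝓔)`. -/
def hypergraphicPolytope (n : ℕ) (𝓔 : Finset (Finset (Fin n))) : Set (Fin n → ℝ) :=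
  {x : Fin n → ℝ | (∀ U : Finset (Fin n), ∑ i ∈ U, x i ≤ fH n 𝓔 U) ∧
    ∑ i, x i = fH n 𝓔 Finset.univ}

/-- The map sending an orientation `h` to the vector whose `v`-entry is the number of
hyperedges with head `v`. -/
def headCountVector (n : ℕ) (𝓔 : Finset (Finset (Fin n))) (h : Edge 𝓔 → Fin n) :
    Fin n → ℝ :=
  fun v => ((Finset.univ.filter fun e : Edge 𝓔 => h e = v).card : ℝ)

open Finset

variable {n : ℕ} {𝓔 : Finset (Finset (Fin n))}

/-- bridge between counting over the subtype and over `𝓔`. -/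
lemma card_filter_bridge (p : Finset (Fin n) → Prop) [DecidablePred p] :
    ((univ : Finset (Edge 𝓔)).filter (fun e => p e.1)).card = (𝓔.filter p).card := by
  apply Finset.card_bij (fun e _ => e.1)
  · intro a ha
    simp only [mem_filter, mem_univ, true_and] at ha
    exact mem_filter.mpr ⟨a.2, ha⟩
  · intro a _ b _ hab; exact Subtype.ext hab
  · intro b hb
    simp only [mem_filter] at hb
    exact ⟨⟨b, hb.1⟩, by simp [hb.2], rfl⟩

lemma fH_eq (U : Finset (Fin n)) :
    fH n 𝓔 U = (((univ : Finset (Edge 𝓔)).filter (fun e => (U ∩ e.1).Nonempty)).card : ℝ) := by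
  rw [fH, ← card_filter_bridge (fun e => (U ∩ e).Nonempty)]

lemma sum_headCount (h : Edge 𝓔 → Fin n) (U : Finset (Fin n)) :
    ∑ i ∈ U, headCountVector n 𝓔 h i
      = (((univ : Finset (Edge 𝓔)).filter fun e => h e ∈ U).card : ℝ) := by
  have : ((univ : Finset (Edge 𝓔)).filter fun e => h e ∈ U).card
      = ∑ b ∈ U, (((univ : Finset (Edge 𝓔)).filter fun e => h e ∈ U).filter
          fun e => h e = b).card := by
    apply Finset.card_eq_sum_card_fiberwise
    intro e he; exact (mem_filter.mp he).2
  rw [this]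
  push_cast
  refine Finset.sum_congr rfl fun b hb => ?_
  rw [headCountVector]
  norm_cast
  have : (((univ : Finset (Edge 𝓔)).filter fun e => h e ∈ U).filter fun e => h e = b)
      = ((univ : Finset (Edge 𝓔)).filter fun e => h e = b) := by
    ext e
    simp only [mem_filter, mem_univ, true_and]
    exact ⟨fun hh => hh.2, fun hh => ⟨hh ▸ hb, hh⟩⟩
  rw [this]

lemma headCount_mem_polytope (hE : ∀ e ∈ 𝓔, e.Nonempty) {h : Edge 𝓔 → Fin n}
    (hor : IsOrientation 𝓔 h) : headCountVector n 𝓔 h ∈ hypergraphicPolytope n 𝓔 := by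
  constructor
  · intro U
    rw [sum_headCount, fH_eq]
    have : ((univ : Finset (Edge 𝓔)).filter fun e => h e ∈ U)
        ⊆ ((univ : Finset (Edge 𝓔)).filter fun e => (U ∩ e.1).Nonempty) := by
      intro e he
      simp only [mem_filter, mem_univ, true_and] at he ⊢
      exact ⟨h e, mem_inter.mpr ⟨he, hor e⟩⟩
    exact_mod_cast Finset.card_le_card this
  · rw [sum_headCount, fH_eq]
    norm_cast
    congr 1
    ext e
    simp only [mem_filter, mem_univ, true_and, univ_inter]
    simp only [iff_true_intro (hE e.1 e.2)]

lemma dot_headCount (c : Fin n → ℝ) (h : Edge 𝓔 → Fin n) :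
    ∑ v, c v * headCountVector n 𝓔 h v = ∑ e : Edge 𝓔, c (h e) := by
  have hfib := Finset.sum_fiberwise_of_maps_to (s := (univ : Finset (Edge 𝓔)))
    (t := (univ : Finset (Fin n))) (g := h)
    (fun (e : Edge 𝓔) (_ : e ∈ univ) => mem_univ (h e)) (fun e => c (h e))
  rw [← hfib]
  refine Finset.sum_congr rfl fun v _ => ?_
  have : ∀ e ∈ (univ : Finset (Edge 𝓔)).filter fun e => h e = v, c (h e) = c v := by
    intro e he; rw [(mem_filter.mp he).2]
  rw [Finset.sum_congr rfl this, Finset.sum_const, headCountVector, nsmul_eq_mul, mul_comm]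


/-- Max of `c` over an edge. -/
noncomputable def Mc (c : Fin n → ℝ) (e : Edge 𝓔) : ℝ :=
  if hne : (e.1.image c).Nonempty then (e.1.image c).max' hne else 0

lemma le_Mc {c : Fin n → ℝ} {e : Edge 𝓔} {w : Fin n} (hw : w ∈ e.1) : c w ≤ Mc c e := by
  rw [Mc, dif_pos ⟨c w, mem_image_of_mem c hw⟩]
  exact le_max' _ _ (mem_image_of_mem c hw)

lemma Mc_le {c : Fin n → ℝ} {e : Edge 𝓔} (hne : e.1.Nonempty) {b : ℝ}
    (hb : ∀ w ∈ e.1, c w ≤ b) : Mc c e ≤ b := by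
  rw [Mc, dif_pos (hne.image c)]
  apply max'_le
  intro y hy
  obtain ⟨w, hw, rfl⟩ := mem_image.mp hy
  exact hb w hw

lemma Mc_exists {c : Fin n → ℝ} {e : Edge 𝓔} (hne : e.1.Nonempty) :
    ∃ w ∈ e.1, c w = Mc c e := by
  rw [Mc, dif_pos (hne.image c)]
  have := max'_mem (e.1.image c) (hne.image c)
  obtain ⟨w, hw, hcw⟩ := mem_image.mp this
  exact ⟨w, hw, hcw⟩

lemma Mc_congr {c c' : Fin n → ℝ} {e : Edge 𝓔} (hcc : ∀ w ∈ e.1, c w = c' w) :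
    Mc c e = Mc c' e := by
  have : e.1.image c = e.1.image c' := image_congr (fun w hw => hcc w hw)
  rw [Mc, Mc, this]

lemma Mc_eq_head {c : Fin n → ℝ} {h : Edge 𝓔 → Fin n} {e : Edge 𝓔} (hhe : h e ∈ e.1)
    (hcompat : ∀ w ∈ e.1, c w ≤ c (h e)) : Mc c e = c (h e) :=
  le_antisymm (Mc_le ⟨h e, hhe⟩ hcompat) (le_Mc hhe)

/-- `U` is a strict superlevel set for `c`. -/
def CU (c : Fin n → ℝ) (U : Finset (Fin n)) : Prop := ∀ i ∈ U, ∀ j ∉ U, c j < c i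

/-- The key greedy bound together with the equality analysis. -/
lemma key (hE : ∀ e ∈ 𝓔, e.Nonempty) {x : Fin n → ℝ}
    (hx : x ∈ hypergraphicPolytope n 𝓔) :
    ∀ (k : ℕ) (c : Fin n → ℝ), ((univ : Finset (Fin n)).image c).card ≤ k →
      (∑ v, c v * x v ≤ ∑ e : Edge 𝓔, Mc c e) ∧
      (∑ v, c v * x v = ∑ e : Edge 𝓔, Mc c e →
        ∀ U : Finset (Fin n), CU c U → ∑ i ∈ U, x i = fH n 𝓔 U) := by
  intro k
  induction k with
  | zero =>
    intro c hc
    have himg : (univ : Finset (Fin n)).image c = ∅ := card_eq_zero.mp (le_antisymm hc (Nat.zero_le _))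
    have huniv : (univ : Finset (Fin n)) = ∅ := image_eq_empty.mp himg
    haveI : IsEmpty (Fin n) := ⟨fun w => by simpa using (huniv ▸ mem_univ w : w ∈ (∅ : Finset (Fin n)))⟩
    haveI : IsEmpty (Edge 𝓔) := ⟨fun e => by
      obtain ⟨w, _⟩ := hE e.1 e.2
      exact IsEmpty.false w⟩
    constructor
    · simp [Finset.univ_eq_empty]
    · intro _ U hU
      have hUe : U = ∅ := eq_empty_of_forall_notMem (fun w _ => IsEmpty.false w)
      subst hUe
      simp [fH]
  | succ k IH =>
    intro c hc
    by_cases hsmall : ((univ : Finset (Fin n)).image c).card ≤ k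
    · exact IH c hsmall
    -- image is nonempty
    have himgne : ((univ : Finset (Fin n)).image c).Nonempty := by
      rw [← card_pos]; omega
    set img := (univ : Finset (Fin n)).image c with himg
    set m := img.max' himgne with hm
    have hcm : ∀ v, c v ≤ m := fun v => le_max' _ _ (mem_image_of_mem c (mem_univ v))
    by_cases hconst : ∀ v, c v = m
    · -- constant function: equality holds
      have hMc : ∀ e : Edge 𝓔, Mc c e = m := by
        intro e
        obtain ⟨w, hw, hcw⟩ := Mc_exists (e := e) (c := c) (hE e.1 e.2)
        rw [← hcw, hconst w]
      have hL : ∑ v, c v * x v = m * fH n 𝓔 univ := by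
        rw [← hx.2, Finset.mul_sum]
        exact Finset.sum_congr rfl fun v _ => by rw [hconst v]
      have hfHuniv : fH n 𝓔 univ = ((univ : Finset (Edge 𝓔)).card : ℝ) := by
        rw [fH_eq]
        norm_cast
        congr 1
        apply filter_true_of_mem
        intro e _
        simpa using hE e.1 e.2
      have hB : ∑ e : Edge 𝓔, Mc c e = m * fH n 𝓔 univ := by
        rw [Finset.sum_congr rfl fun e _ => hMc e, Finset.sum_const, hfHuniv, nsmul_eq_mul,
          mul_comm]
      constructor
      · rw [hL, hB]
      · intro _ U hU
        rcases U.eq_empty_or_nonempty with rfl | ⟨i0, hi0⟩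
        · simp [fH]
        · have : U = univ := by
            apply eq_univ_of_forall
            intro j
            by_contra hj
            have := hU i0 hi0 j hj
            rw [hconst j, hconst i0] at this
            exact lt_irrefl m this
          rw [this]
          exact hx.2
    · -- non-constant: cap the top level
      push_neg at hconst
      obtain ⟨v0, hv0⟩ := hconst
      have hv0m : c v0 < m := lt_of_le_of_ne (hcm v0) hv0
      have herasene : (img.erase m).Nonempty :=
        ⟨c v0, mem_erase.mpr ⟨hv0, mem_image_of_mem c (mem_univ v0)⟩⟩
      set m' := (img.erase m).max' herasene with hm'
      have hm'm : m' < m := by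
        have := max'_mem _ herasene
        exact lt_of_le_of_ne (le_max' _ _ (mem_of_mem_erase this)) (ne_of_mem_erase this)
      have hle_m' : ∀ v, c v ≠ m → c v ≤ m' := fun v hv =>
        le_max' _ _ (mem_erase.mpr ⟨hv, mem_image_of_mem c (mem_univ v)⟩)
      set c'' : Fin n → ℝ := fun v => if c v = m then m' else c v with hc''
      have hc''le : ∀ v, c'' v ≤ m' := by
        intro v
        by_cases hv : c v = m
        · simp [hc'', hv]
        · simp only [hc'', if_neg hv]; exact hle_m' v hv
      have hc''img : ((univ : Finset (Fin n)).image c'').card ≤ k := by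
        have hsub : (univ : Finset (Fin n)).image c'' ⊆ img.erase m := by
          intro y hy
          obtain ⟨v, _, rfl⟩ := mem_image.mp hy
          by_cases hv : c v = m
          · simp only [hc'', if_pos hv]
            exact mem_erase.mpr ⟨ne_of_lt hm'm, mem_of_mem_erase (max'_mem _ herasene)⟩
          · simp only [hc'', if_neg hv]
            exact mem_erase.mpr ⟨hv, mem_image_of_mem c (mem_univ v)⟩
        calc ((univ : Finset (Fin n)).image c'').card ≤ (img.erase m).card :=
              card_le_card hsub
          _ = img.card - 1 := card_erase_of_mem (max'_mem _ himgne)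
          _ ≤ k := by omega
      set W := (univ : Finset (Fin n)).filter (fun v => c v = m) with hW
      set δ := m - m' with hδ
      have hδpos : 0 < δ := by simp [hδ]; linarith
      -- split the linear functional
      have hsplit : ∑ v, c v * x v = ∑ v, c'' v * x v + δ * ∑ i ∈ W, x i := by
        rw [Finset.mul_sum, Finset.sum_filter, ← Finset.sum_add_distrib]
        refine Finset.sum_congr rfl fun v _ => ?_
        by_cases hv : c v = m
        · simp [hc'', hv, hδ]; ring
        · simp [hc'', hv]
      -- split the bound
      have hMcsplit : ∀ e : Edge 𝓔, Mc c e = Mc c'' e + δ * (if (W ∩ e.1).Nonempty then 1 else 0) := by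
        intro e
        by_cases hWe : (W ∩ e.1).Nonempty
        · obtain ⟨w, hw⟩ := hWe
          have hwW : c w = m := (mem_filter.mp (mem_inter.mp hw).1).2
          have hwe : w ∈ e.1 := (mem_inter.mp hw).2
          have h1 : Mc c e = m :=
            le_antisymm (Mc_le (hE e.1 e.2) (fun z _ => hcm z)) (hwW ▸ le_Mc hwe)
          have h2 : Mc c'' e = m' := by
            apply le_antisymm (Mc_le (hE e.1 e.2) (fun z _ => hc''le z))
            have : c'' w = m' := by simp [hc'', hwW]
            exact this ▸ le_Mc hwe
          rw [h1, h2, if_pos ⟨w, hw⟩, hδ]; ring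
        · have : ∀ z ∈ e.1, c z = c'' z := by
            intro z hz
            have : c z ≠ m := by
              intro hc
              exact hWe ⟨z, mem_inter.mpr ⟨mem_filter.mpr ⟨mem_univ z, hc⟩, hz⟩⟩
            simp [hc'', this]
          rw [Mc_congr this, if_neg hWe]; ring
      have hBsplit : ∑ e : Edge 𝓔, Mc c e = ∑ e : Edge 𝓔, Mc c'' e + δ * fH n 𝓔 W := by
        rw [Finset.sum_congr rfl fun e _ => hMcsplit e, Finset.sum_add_distrib, ← Finset.mul_sum]
        congr 1
        rw [Finset.sum_boole, fH_eq]
      obtain ⟨IHub, IHeq⟩ := IH c'' hc''img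
      have hWle : ∑ i ∈ W, x i ≤ fH n 𝓔 W := hx.1 W
      constructor
      · rw [hsplit, hBsplit]
        have := mul_le_mul_of_nonneg_left hWle (le_of_lt hδpos)
        linarith
      · intro heq U hU
        have hWeq : ∑ i ∈ W, x i = fH n 𝓔 W := by
          rw [hsplit, hBsplit] at heq
          nlinarith [mul_le_mul_of_nonneg_left hWle (le_of_lt hδpos)]
        have hc''eq : ∑ v, c'' v * x v = ∑ e : Edge 𝓔, Mc c'' e := by
          rw [hsplit, hBsplit] at heq
          rw [hWeq] at heq
          linarith
        rcases U.eq_empty_or_nonempty with rfl | ⟨i0, hi0⟩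
        · simp [fH]
        have hWU : W ⊆ U := by
          intro w hw
          by_contra hwU
          have h1 := hU i0 hi0 w hwU
          have h2 : c w = m := (mem_filter.mp hw).2
          have := hcm i0
          linarith
        by_cases hm'U : ∀ j, c j = m' → j ∈ U
        · -- U is also a strict superlevel set for c''
          have hU'' : CU c'' U := by
            intro i hi j hj
            have hcj : c j < c i := hU i hi j hj
            have hjm : c j ≠ m := by
              intro hjm
              exact hj (hWU (mem_filter.mpr ⟨mem_univ j, hjm⟩))
            have hjm' : c j ≠ m' := fun hh => hj (hm'U j hh)
            by_cases hci : c i = m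
            · simp only [hc'', if_pos hci, if_neg hjm]
              exact lt_of_le_of_ne (hle_m' j hjm) hjm'
            · simp only [hc'', if_neg hci, if_neg hjm]
              exact hcj
          exact IHeq hc''eq U hU''
        · -- U = W
          push_neg at hm'U
          obtain ⟨j0, hj0m, hj0U⟩ := hm'U
          have hUW : U ⊆ W := by
            intro i hi
            have h1 := hU i hi j0 hj0U
            rw [hj0m] at h1
            have h2 : c i = m := by
              by_contra hcim
              exact absurd h1 (not_lt.mpr (hle_m' i hcim))
            exact mem_filter.mpr ⟨mem_univ i, h2⟩
          rw [subset_antisymm hUW hWU]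
          exact hWeq

/-- If all edges meeting `U` have their head in `U`, the head-count of `U` is tight. -/
lemma tight_of_headsIn {h : Edge 𝓔 → Fin n} (hor : IsOrientation 𝓔 h) {U : Finset (Fin n)}
    (hin : ∀ e : Edge 𝓔, (U ∩ e.1).Nonempty → h e ∈ U) :
    ∑ i ∈ U, headCountVector n 𝓔 h i = fH n 𝓔 U := by
  rw [sum_headCount, fH_eq]
  norm_cast
  congr 1
  ext e
  simp only [mem_filter, mem_univ, true_and]
  exact ⟨fun hh => ⟨h e, mem_inter.mpr ⟨hh, hor e⟩⟩, hin e⟩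

lemma compat_tight {h : Edge 𝓔 → Fin n} (hor : IsOrientation 𝓔 h) {c : Fin n → ℝ}
    (hcompat : ∀ e : Edge 𝓔, ∀ w ∈ e.1, c w ≤ c (h e)) {U : Finset (Fin n)} (hU : CU c U) :
    ∑ i ∈ U, headCountVector n 𝓔 h i = fH n 𝓔 U := by
  apply tight_of_headsIn hor
  rintro e ⟨w, hw⟩
  obtain ⟨hwU, hwe⟩ := mem_inter.mp hw
  by_contra hne
  exact absurd (hcompat e w hwe) (not_le.mpr (hU w hwU (h e) hne))

lemma dot_eq_bound {h : Edge 𝓔 → Fin n} (hor : IsOrientation 𝓔 h) {c : Fin n → ℝ}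
    (hcompat : ∀ e : Edge 𝓔, ∀ w ∈ e.1, c w ≤ c (h e)) :
    ∑ v, c v * headCountVector n 𝓔 h v = ∑ e : Edge 𝓔, Mc c e := by
  rw [dot_headCount]
  exact Finset.sum_congr rfl fun e _ => (Mc_eq_head (hor e) (hcompat e)).symm

/-- linearity of the objective on combinations. -/
lemma dot_combo (c : Fin n → ℝ) (y z : Fin n → ℝ) (a b : ℝ) :
    ∑ v, c v * (a • y + b • z) v = a * ∑ v, c v * y v + b * ∑ v, c v * z v := by
  rw [Finset.mul_sum, Finset.mul_sum, ← Finset.sum_add_distrib]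
  refine Finset.sum_congr rfl fun v _ => ?_
  simp only [Pi.add_apply, Pi.smul_apply, smul_eq_mul]
  ring

lemma combo_eq {L1 L2 b a1 a2 : ℝ} (h1 : L1 ≤ b) (h2 : L2 ≤ b) (ha1 : 0 < a1)
    (ha2 : 0 < a2) (ha12 : a1 + a2 = 1) (hsum : a1 * L1 + a2 * L2 = b) :
    L1 = b ∧ L2 = b := by
  have k2 : a2 * L2 ≤ a2 * b := mul_le_mul_of_nonneg_left h2 ha2.le
  have k1 : a1 * L1 ≤ a1 * b := mul_le_mul_of_nonneg_left h1 ha1.le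
  have hb : a1 * b + a2 * b = b := by linear_combination b * ha12
  have hb1 : a1 * b ≤ a1 * L1 := by linarith
  have hb2 : a2 * b ≤ a2 * L2 := by linarith
  exact ⟨le_antisymm h1 (le_of_mul_le_mul_left hb1 ha1),
    le_antisymm h2 (le_of_mul_le_mul_left hb2 ha2)⟩

/-- The set where a bounded linear functional attains its max is an extreme subset. -/
lemma isExtreme_face {A : Set (Fin n → ℝ)} (c : Fin n → ℝ) (b : ℝ)
    (hub : ∀ y ∈ A, ∑ v, c v * y v ≤ b) :
    IsExtreme ℝ A {y | y ∈ A ∧ ∑ v, c v * y v = b} := by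
  constructor
  · intro y hy; exact hy.1
  · rintro y1 hy1 y2 hy2 y ⟨hyA, hyb⟩ ⟨a1, a2, ha1, ha2, ha12, hcomb⟩
    have h1 := hub y1 hy1
    have h2 := hub y2 hy2
    have hsum : a1 * ∑ v, c v * y1 v + a2 * ∑ v, c v * y2 v = b := by
      rw [← dot_combo c y1 y2 a1 a2, hcomb, hyb]
    obtain ⟨e1, e2⟩ := combo_eq h1 h2 ha1 ha2 ha12 hsum
    exact ⟨hy1, e1⟩

lemma polytope_convex : Convex ℝ (hypergraphicPolytope n 𝓔) := by
  intro y hy z hz a b ha hb hab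
  constructor
  · intro U
    have h1 := hy.1 U
    have h2 := hz.1 U
    have : ∑ i ∈ U, (a • y + b • z) i = a * ∑ i ∈ U, y i + b * ∑ i ∈ U, z i := by
      rw [Finset.mul_sum, Finset.mul_sum, ← Finset.sum_add_distrib]
      exact Finset.sum_congr rfl fun i _ => by simp [mul_comm]
    rw [this]
    calc a * ∑ i ∈ U, y i + b * ∑ i ∈ U, z i
        ≤ a * fH n 𝓔 U + b * fH n 𝓔 U :=
          add_le_add (mul_le_mul_of_nonneg_left h1 ha) (mul_le_mul_of_nonneg_left h2 hb)
      _ = fH n 𝓔 U := by rw [← add_mul, hab, one_mul]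
  · have : ∑ i, (a • y + b • z) i = a * ∑ i, y i + b * ∑ i, z i := by
      rw [Finset.mul_sum, Finset.mul_sum, ← Finset.sum_add_distrib]
      exact Finset.sum_congr rfl fun i _ => by simp [mul_comm]
    rw [this, hy.2, hz.2]
    linear_combination (fH n 𝓔 univ) * hab

/-- Coordinates (or tied pairs) are determined by tight superlevel sets. -/
lemma tight_sub {c : Fin n → ℝ} {x : Fin n → ℝ}
    (htx : ∀ U : Finset (Fin n), CU c U → ∑ i ∈ U, x i = fH n 𝓔 U) (w : Fin n) :
    ∑ i ∈ (univ : Finset (Fin n)).filter (fun z => c w ≤ c z), x i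
      - ∑ i ∈ (univ : Finset (Fin n)).filter (fun z => c w < c z), x i
      = fH n 𝓔 ((univ : Finset (Fin n)).filter (fun z => c w ≤ c z))
        - fH n 𝓔 ((univ : Finset (Fin n)).filter (fun z => c w < c z)) := by
  have hcu1 : CU c ((univ : Finset (Fin n)).filter (fun z => c w ≤ c z)) := by
    intro i hi j hj
    simp only [mem_filter, mem_univ, true_and] at hi hj
    exact lt_of_lt_of_le (not_le.mp hj) hi
  have hcu2 : CU c ((univ : Finset (Fin n)).filter (fun z => c w < c z)) := by
    intro i hi j hj
    simp only [mem_filter, mem_univ, true_and] at hi hj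
    exact lt_of_le_of_lt (not_lt.mp hj) hi
  rw [htx _ hcu1, htx _ hcu2]

lemma level_sum {c : Fin n → ℝ} (x : Fin n → ℝ) (w : Fin n) :
    ∑ i ∈ (univ : Finset (Fin n)).filter (fun z => c w ≤ c z), x i
      - ∑ i ∈ (univ : Finset (Fin n)).filter (fun z => c w < c z), x i
      = ∑ i ∈ (univ : Finset (Fin n)).filter (fun z => c z = c w), x i := by
  have hsub : (univ : Finset (Fin n)).filter (fun z => c w < c z)
      ⊆ (univ : Finset (Fin n)).filter (fun z => c w ≤ c z) := by
    intro i hi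
    simp only [mem_filter, mem_univ, true_and] at hi ⊢
    exact le_of_lt hi
  rw [← Finset.sum_sdiff hsub]
  have : (univ : Finset (Fin n)).filter (fun z => c w ≤ c z)
      \ (univ : Finset (Fin n)).filter (fun z => c w < c z)
      = (univ : Finset (Fin n)).filter (fun z => c z = c w) := by
    ext i
    simp only [mem_sdiff, mem_filter, mem_univ, true_and]
    constructor
    · rintro ⟨hle, hnlt⟩; exact le_antisymm (not_lt.mp hnlt) hle
    · intro hh; rw [hh]; simp
  rw [← this]; ring

/-- a strictly monotone rank for an acyclic relation on `Fin n`. -/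
lemma rank_exists (r : Fin n → Fin n → Prop) (hirr : ∀ a, ¬ Relation.TransGen r a a) :
    ∃ ρ : Fin n → ℕ, ∀ a b, r a b → ρ a < ρ b := by
  classical
  refine ⟨fun a => ((univ : Finset (Fin n)).filter (fun z => Relation.TransGen r z a)).card, ?_⟩
  intro a b hab
  apply Finset.card_lt_card
  rw [Finset.ssubset_iff_of_subset]
  · exact ⟨a, mem_filter.mpr ⟨mem_univ a, Relation.TransGen.single hab⟩,
      fun hmem => hirr a (mem_filter.mp hmem).2⟩
  · intro z hz
    simp only [mem_filter, mem_univ, true_and] at hz ⊢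
    exact hz.tail hab

lemma nat_step_lt {a b s t : ℕ} (h : a < b) (hs : s ≤ n) : (n+1)*a + s < (n+1)*b + t := by
  have h1 : (n+1)*a + s < (n+1)*(a+1) := by nlinarith
  have h2 : (n+1)*(a+1) ≤ (n+1)*b := Nat.mul_le_mul_left _ h
  omega

lemma exists_compat {h : Edge 𝓔 → Fin n} (hac : IsAcyclic 𝓔 h) :
    ∃ c : Fin n → ℝ, Function.Injective c ∧
      ∀ e : Edge 𝓔, ∀ w ∈ e.1, c w ≤ c (h e) := by
  obtain ⟨ρ, hρ⟩ := rank_exists (Arc 𝓔 h) hac.2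
  set f : Fin n → ℕ := fun w => (n+1) * ρ w + w.val with hf
  refine ⟨fun w => (f w : ℝ), ?_, ?_⟩
  · intro w z hwz
    have hwz' : f w = f z := Nat.cast_injective hwz
    rw [hf] at hwz'
    simp only at hwz'
    rcases lt_trichotomy (ρ w) (ρ z) with hlt | heq | hgt
    · exact absurd hwz' (Nat.ne_of_lt (nat_step_lt hlt (le_of_lt w.isLt)))
    · rw [heq] at hwz'
      exact Fin.ext (Nat.add_left_cancel hwz')
    · exact absurd hwz'.symm (Nat.ne_of_lt (nat_step_lt hgt (le_of_lt z.isLt)))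
  · intro e w hw
    by_cases hwh : w = h e
    · rw [hwh]
    · have harc : Arc 𝓔 h w (h e) := ⟨e, rfl, hw, hwh⟩
      have hlt := nat_step_lt (t := (h e).val) (hρ _ _ harc) (le_of_lt w.isLt)
      have hle : f w ≤ f (h e) := le_of_lt hlt
      show ((f w : ℕ) : ℝ) ≤ ((f (h e) : ℕ) : ℝ)
      exact_mod_cast hle

/-- acyclic orientations give extreme points. -/
lemma acyclic_extremePoint (hE : ∀ e ∈ 𝓔, e.Nonempty) {h : Edge 𝓔 → Fin n}
    (hac : IsAcyclic 𝓔 h) :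
    headCountVector n 𝓔 h ∈ (hypergraphicPolytope n 𝓔).extremePoints ℝ := by
  obtain ⟨c, hinj, hcompat⟩ := exists_compat hac
  rw [mem_extremePoints]
  refine ⟨headCount_mem_polytope hE hac.1, ?_⟩
  intro y1 hy1 y2 hy2 ⟨a1, a2, ha1, ha2, ha12, hcomb⟩
  have hxB : ∑ v, c v * headCountVector n 𝓔 h v = ∑ e : Edge 𝓔, Mc c e :=
    dot_eq_bound hac.1 hcompat
  have hub1 := (key hE hy1 _ c le_rfl).1
  have hub2 := (key hE hy2 _ c le_rfl).1
  have hsum : a1 * ∑ v, c v * y1 v + a2 * ∑ v, c v * y2 v = ∑ e : Edge 𝓔, Mc c e := by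
    rw [← dot_combo c y1 y2 a1 a2, hcomb, hxB]
  obtain ⟨e1, e2⟩ := combo_eq hub1 hub2 ha1 ha2 ha12 hsum
  have hxt : ∀ U : Finset (Fin n), CU c U →
      ∑ i ∈ U, headCountVector n 𝓔 h i = fH n 𝓔 U :=
    fun U hU => compat_tight hac.1 hcompat hU
  have hdet : ∀ y : Fin n → ℝ, (∀ U : Finset (Fin n), CU c U → ∑ i ∈ U, y i = fH n 𝓔 U) →
      y = headCountVector n 𝓔 h := by
    intro y hyt
    funext w
    have h1 := (tight_sub hyt w).trans (tight_sub hxt w).symm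
    rw [level_sum, level_sum] at h1
    have hlev : (univ : Finset (Fin n)).filter (fun z => c z = c w) = {w} := by
      ext z
      simp only [mem_filter, mem_univ, true_and, mem_singleton]
      exact ⟨fun hh => hinj hh, fun hh => by rw [hh]⟩
    rw [hlev] at h1
    simpa using h1
  refine ⟨hdet y1 ((key hE hy1 _ c le_rfl).2 e1), hdet y2 ((key hE hy2 _ c le_rfl).2 e2)⟩

/-- injectivity on acyclic orientations. -/
lemma headCount_injOn {h1 h2 : Edge 𝓔 → Fin n}
    (hac1 : IsAcyclic 𝓔 h1) (hac2 : IsAcyclic 𝓔 h2)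
    (heq : headCountVector n 𝓔 h1 = headCountVector n 𝓔 h2) : h1 = h2 := by
  obtain ⟨c, hinj, hcompat⟩ := exists_compat hac1
  have hB : ∑ e : Edge 𝓔, c (h2 e) = ∑ e : Edge 𝓔, Mc c e := by
    rw [← dot_headCount, ← heq, dot_eq_bound hac1.1 hcompat]
  have hle : ∀ e ∈ (univ : Finset (Edge 𝓔)), c (h2 e) ≤ Mc c e :=
    fun e _ => le_Mc (hac2.1 e)
  have hptw := (Finset.sum_eq_sum_iff_of_le hle).mp hB
  funext e
  have h1 := hptw e (mem_univ e)
  have h2 := Mc_eq_head (hac1.1 e) (hcompat e)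
  exact (hinj (h1.trans h2)).symm

lemma cross_boundary {r : Fin n → Fin n → Prop} {p q : Fin n}
    (h : Relation.ReflTransGen r p q) {U : Finset (Fin n)} (hp : p ∈ U) (hq : q ∉ U) :
    ∃ s t, r s t ∧ s ∈ U ∧ t ∉ U := by
  induction h with
  | refl => exact absurd hp hq
  | tail hab hbc ih =>
    rename_i b c'
    by_cases hb : b ∈ U
    · exact ⟨b, c', hbc, hb, hq⟩
    · exact ih hb

/-- head-count of a single-head modification. -/
lemma headCount_update (g : Edge 𝓔 → Fin n) (e0 : Edge 𝓔) (a : Fin n) (w : Fin n) :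
    headCountVector n 𝓔 (Function.update g e0 a) w
      = headCountVector n 𝓔 g w + (if a = w then 1 else 0) - (if g e0 = w then 1 else 0) := by
  rw [headCountVector, headCountVector]
  rw [← Finset.sum_boole (p := fun e : Edge 𝓔 => Function.update g e0 a e = w),
    ← Finset.sum_boole (p := fun e : Edge 𝓔 => g e = w)]
  rw [← Finset.sum_erase_add _ _ (mem_univ e0), ← Finset.sum_erase_add _ _ (mem_univ e0)]
  have hcong : ∑ e ∈ univ.erase e0, (if Function.update g e0 a e = w then (1:ℝ) else 0)
      = ∑ e ∈ univ.erase e0, (if g e = w then (1:ℝ) else 0) := by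
    refine Finset.sum_congr rfl fun e he => ?_
    rw [Function.update_of_ne (mem_erase.mp he).1]
  rw [hcong, Function.update_self]
  ring

/-- an orientation with a cycle is not an extreme point. -/
lemma cyclic_not_extreme (hE : ∀ e ∈ 𝓔, e.Nonempty) {g : Edge 𝓔 → Fin n}
    (hor : IsOrientation 𝓔 g) {v : Fin n} (hcyc : Relation.TransGen (Arc 𝓔 g) v v) :
    headCountVector n 𝓔 g ∉ (hypergraphicPolytope n 𝓔).extremePoints ℝ := by
  obtain ⟨a, hpath, harc⟩ := (Relation.TransGen.tail'_iff).mp hcyc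
  obtain ⟨e0, he0, hae, hav⟩ := harc
  set x := headCountVector n 𝓔 g with hx
  set y := headCountVector n 𝓔 (Function.update g e0 a) with hy
  set z : Fin n → ℝ := fun w => x w - (if a = w then 1 else 0) + (if v = w then 1 else 0)
    with hz
  have hxP : x ∈ hypergraphicPolytope n 𝓔 := headCount_mem_polytope hE hor
  have hyP : y ∈ hypergraphicPolytope n 𝓔 := by
    apply headCount_mem_polytope hE
    intro e
    by_cases he : e = e0
    · rw [he, Function.update_self]; exact hae
    · rw [Function.update_of_ne he]; exact hor e
  have hyw : ∀ w, y w = x w + (if a = w then 1 else 0) - (if v = w then 1 else 0) := by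
    intro w
    rw [hy, headCount_update, ← hx, he0]
  have hsum_ind : ∀ (U : Finset (Fin n)) (b : Fin n),
      ∑ i ∈ U, (if b = i then (1:ℝ) else 0) = if b ∈ U then 1 else 0 :=
    fun U b => Finset.sum_ite_eq U b (fun _ => (1:ℝ))
  have hzP : z ∈ hypergraphicPolytope n 𝓔 := by
    constructor
    · intro U
      have hxU := hxP.1 U
      have hzsum : ∑ i ∈ U, z i = ∑ i ∈ U, x i - (if a ∈ U then 1 else 0)
          + (if v ∈ U then 1 else 0) := by
        rw [hz]
        simp only [Finset.sum_add_distrib, Finset.sum_sub_distrib, hsum_ind]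
      rw [hzsum]
      by_cases haU : a ∈ U
      · by_cases hvU : v ∈ U <;> simp [haU, hvU] <;> linarith
      · by_cases hvU : v ∈ U
        · -- the strict case
          simp only [haU, hvU, if_true, if_false]
          obtain ⟨s, t, hst, hsU, htU⟩ := cross_boundary hpath hvU haU
          obtain ⟨et, hhet, hset, hsne⟩ := hst
          have hstrict : ((univ : Finset (Edge 𝓔)).filter fun e => g e ∈ U).card
              < ((univ : Finset (Edge 𝓔)).filter fun e => (U ∩ e.1).Nonempty).card := by
            apply Finset.card_lt_card
            rw [Finset.ssubset_iff_of_subset]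
            · refine ⟨et, ?_, ?_⟩
              · exact mem_filter.mpr ⟨mem_univ et, ⟨s, mem_inter.mpr ⟨hsU, hset⟩⟩⟩
              · simp only [mem_filter, mem_univ, true_and]
                rw [hhet]; exact htU
            · intro e he
              simp only [mem_filter, mem_univ, true_and] at he ⊢
              exact ⟨g e, mem_inter.mpr ⟨he, hor e⟩⟩
          have := sum_headCount g U
          rw [← hx] at this
          rw [this, fH_eq]
          have : (((univ : Finset (Edge 𝓔)).filter fun e => g e ∈ U).card : ℝ) + 1
              ≤ (((univ : Finset (Edge 𝓔)).filter fun e => (U ∩ e.1).Nonempty).card : ℝ) := by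
            exact_mod_cast hstrict
          linarith
        · simp [haU, hvU]; linarith
    · have : ∑ i, z i = ∑ i, x i - (if a ∈ univ then 1 else 0)
          + (if v ∈ univ then 1 else 0) := by
        rw [hz]
        simp only [Finset.sum_add_distrib, Finset.sum_sub_distrib, hsum_ind]
      rw [this, hxP.2]
      simp
  intro hext
  rw [mem_extremePoints] at hext
  have hmem : x ∈ openSegment ℝ y z := by
    refine ⟨1/2, 1/2, by norm_num, by norm_num, by norm_num, ?_⟩
    funext w
    simp only [Pi.add_apply, Pi.smul_apply, smul_eq_mul]
    rw [hyw w, hz]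
    simp only
    ring
  obtain ⟨hy1, hz1⟩ := hext.2 y hyP z hzP hmem
  have : y a = z a := by rw [hy1, hz1]
  rw [hyw a, hz] at this
  simp only [if_pos rfl, if_neg (Ne.symm hav), if_true] at this
  linarith

/-- every extreme point comes from an acyclic orientation. -/
lemma extreme_surj (hE : ∀ e ∈ 𝓔, e.Nonempty) {x : Fin n → ℝ}
    (hx : x ∈ (hypergraphicPolytope n 𝓔).extremePoints ℝ) :
    ∃ h : Edge 𝓔 → Fin n, IsAcyclic 𝓔 h ∧ headCountVector n 𝓔 h = x := by
  classical
  set S : Set (Fin n → ℝ) := headCountVector n 𝓔 '' {g | IsOrientation 𝓔 g} with hS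
  have hSfin : S.Finite := (Set.toFinite _).image _
  have hSP : S ⊆ hypergraphicPolytope n 𝓔 := by
    rintro _ ⟨g, hg, rfl⟩
    exact headCount_mem_polytope hE hg
  have hPS : hypergraphicPolytope n 𝓔 ⊆ convexHull ℝ S := by
    intro p hp
    by_contra hpS
    obtain ⟨f, u, hfu, hufp⟩ := geometric_hahn_banach_closed_point
      (convex_convexHull ℝ S) ((hSfin.isCompact_convexHull (𝕜 := ℝ)).isClosed) hpS
    set c : Fin n → ℝ := fun w => f (fun j => if w = j then (1:ℝ) else 0) with hc
    have hfL : ∀ y : Fin n → ℝ, f y = ∑ v, c v * y v := by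
      intro y
      conv_lhs => rw [pi_eq_sum_univ y, map_sum]
      refine Finset.sum_congr rfl fun v _ => ?_
      rw [map_smul]
      simp [hc, mul_comm]
    -- an orientation attaining the max in every edge
    have hex : ∀ e : Edge 𝓔, ∃ w, w ∈ e.1 ∧ c w = Mc c e := fun e => Mc_exists (hE e.1 e.2)
    choose g hg1 hg2 using hex
    have hgS : headCountVector n 𝓔 g ∈ S := ⟨g, fun e => hg1 e, rfl⟩
    have hgB : ∑ v, c v * headCountVector n 𝓔 g v = ∑ e : Edge 𝓔, Mc c e := by
      rw [dot_headCount]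
      exact Finset.sum_congr rfl fun e _ => hg2 e
    have hub := (key hE hp _ c le_rfl).1
    have h1 : f (headCountVector n 𝓔 g) < u := hfu _ (subset_convexHull ℝ S hgS)
    rw [hfL] at h1 hufp
    rw [hgB] at h1
    linarith
  have hPconv := subset_antisymm hPS (convexHull_min hSP (polytope_convex))
  rw [hPconv] at hx
  obtain ⟨g, hgor, hgx⟩ := extremePoints_convexHull_subset hx
  have hgac : IsAcyclic 𝓔 g := by
    refine ⟨hgor, fun v hcyc => ?_⟩
    have := cyclic_not_extreme hE hgor hcyc
    rw [hgx, hPconv] at this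
    exact this hx
  exact ⟨g, hgac, hgx⟩

lemma restricted_ne {α : Type*} {r : α → α → Prop} {u a b : α}
    (h : Relation.TransGen (fun x y => r x y ∧ x ≠ u ∧ y ≠ u) a b) : b ≠ u := by
  induction h with
  | single hs => exact hs.2.2
  | tail _ hs _ => exact hs.2.2

lemma cycle_split {α : Type*} {r : α → α → Prop} (u : α) {p : α}
    (h : Relation.TransGen r p p) :
    (∃ q, Relation.TransGen (fun a b => r a b ∧ a ≠ u ∧ b ≠ u) q q) ∨
      Relation.TransGen r u u := by
  have claim : ∀ a b, Relation.TransGen r a b →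
      Relation.TransGen (fun x y => r x y ∧ x ≠ u ∧ y ≠ u) a b ∨
        (Relation.ReflTransGen r a u ∧ Relation.ReflTransGen r u b) := by
    intro a b hab
    induction hab with
    | single hstep =>
      rename_i c
      by_cases hau : a = u
      · subst hau
        exact Or.inr ⟨Relation.ReflTransGen.refl, Relation.ReflTransGen.single hstep⟩
      · by_cases hcu : c = u
        · subst hcu
          exact Or.inr ⟨Relation.ReflTransGen.single hstep, Relation.ReflTransGen.refl⟩
        · exact Or.inl (Relation.TransGen.single ⟨hstep, hau, hcu⟩)
    | tail hab' hbc ih =>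
      rename_i b' c'
      rcases ih with h1 | ⟨h1, h2⟩
      · by_cases hcu : c' = u
        · subst hcu
          refine Or.inr ⟨?_, Relation.ReflTransGen.refl⟩
          exact ((Relation.TransGen.mono (r := fun x y => r x y ∧ x ≠ c' ∧ y ≠ c') (p := r) (fun x y hxy => hxy.1) _ _ h1).tail hbc).to_reflTransGen
        · exact Or.inl (h1.tail ⟨hbc, restricted_ne h1, hcu⟩)
      · exact Or.inr ⟨h1, h2.tail hbc⟩
  rcases claim p p h with h1 | ⟨h1, h2⟩
  · exact Or.inl ⟨p, h1⟩
  · exact Or.inr ((Relation.TransGen.trans_right h2 h).trans_left h1)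

lemma flip_segment_extreme (hE : ∀ e ∈ 𝓔, e.Nonempty) {h1 : Edge 𝓔 → Fin n} {u v : Fin n}
    (hac1 : IsAcyclic 𝓔 h1) (hac2 : IsAcyclic 𝓔 (flip 𝓔 h1 u v))
    (hnefl : flip 𝓔 h1 u v ≠ h1) (huv : u ≠ v) :
    headCountVector n 𝓔 h1 ≠ headCountVector n 𝓔 (flip 𝓔 h1 u v) ∧
      IsExtreme ℝ (hypergraphicPolytope n 𝓔)
        (segment ℝ (headCountVector n 𝓔 h1) (headCountVector n 𝓔 (flip 𝓔 h1 u v))) := by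
  classical
  set h2 := flip 𝓔 h1 u v with hh2
  have h2eq : ∀ e : Edge 𝓔, h2 e = if u ∈ e.1 ∧ v ∈ e.1 ∧ h1 e = u then v else h1 e :=
    fun e => rfl
  obtain ⟨e0, he0u, he0v, he0h⟩ : ∃ e0 : Edge 𝓔, u ∈ e0.1 ∧ v ∈ e0.1 ∧ h1 e0 = u := by
    by_contra hcon
    push_neg at hcon
    apply hnefl
    funext e
    rw [hh2, flip]
    by_cases hcond : u ∈ e.1 ∧ v ∈ e.1 ∧ h1 e = u
    · exact absurd hcond.2.2 (hcon e hcond.1 hcond.2.1)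
    · exact if_neg hcond
  have he0f : h2 e0 = v := by rw [h2eq, if_pos ⟨he0u, he0v, he0h⟩]
  have harc_vu : Arc 𝓔 h1 v u := ⟨e0, he0h, he0v, huv.symm⟩
  have hA2uv : Arc 𝓔 h2 u v := ⟨e0, he0f, he0u, huv⟩
  have hnohead : ∀ e : Edge 𝓔, h1 e = v → u ∉ e.1 := by
    intro e hhe hue
    exact hac1.2 u ((Relation.TransGen.single ⟨e, hhe, hue, huv⟩).tail harc_vu)
  -- the merged vertex map and quotient relation
  set q : Fin n → Fin n := fun w => if w = v then u else w with hq
  have hq_ne_v : ∀ w, q w ≠ v := by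
    intro w
    rw [hq]
    by_cases hwv : w = v
    · simp [hwv, huv]
    · simp [hwv]
  have hq_eq : ∀ w, q w = w ∨ w = v := by
    intro w
    by_cases hwv : w = v
    · exact Or.inr hwv
    · exact Or.inl (by rw [hq]; simp [hwv])
  have hqu : q u = u := by rw [hq]; simp [huv]
  have hqv : q v = u := by rw [hq]; simp
  have hq_merge : ∀ w z, q w = q z → w = z ∨ ((w = u ∨ w = v) ∧ (z = u ∨ z = v)) := by
    intro w z hwz
    by_cases hwv : w = v <;> by_cases hzv : z = v
    · exact Or.inl (hwv.trans hzv.symm)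
    · rw [hq] at hwz; simp [hwv, hzv] at hwz
      exact Or.inr ⟨Or.inr hwv, Or.inl hwz.symm⟩
    · rw [hq] at hwz; simp [hwv, hzv] at hwz
      exact Or.inr ⟨Or.inl hwz, Or.inr hzv⟩
    · rw [hq] at hwz; simp [hwv, hzv] at hwz
      exact Or.inl hwz
  set R : Fin n → Fin n → Prop :=
    fun w z => w ≠ z ∧ ∃ e : Edge 𝓔, q (h1 e) = z ∧ ∃ a, a ∈ e.1 ∧ q a = w with hR
  -- step analysis
  have hstep1 : ∀ w z, R w z → w ≠ u → z ≠ u → Arc 𝓔 h1 w z ∧ Arc 𝓔 h2 w z := by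
    rintro w z ⟨hwz, e, hhead, a, hae, hqa⟩ hwu hzu
    have hzv : z ≠ v := hhead ▸ hq_ne_v (h1 e)
    have hwv : w ≠ v := hqa ▸ hq_ne_v a
    have hh1e : h1 e = z := by
      rcases hq_eq (h1 e) with hq1 | hq1
      · rw [← hhead, hq1]
      · rw [hq1, hqv] at hhead; exact absurd hhead.symm hzu
    have ha : a = w := by
      rcases hq_eq a with hq1 | hq1
      · rw [← hqa, hq1]
      · rw [hq1, hqv] at hqa; exact absurd hqa.symm hwu
    have h2e : h2 e = h1 e := by
      rw [h2eq]
      apply if_neg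
      rintro ⟨-, -, hcon⟩
      rw [hcon] at hh1e
      exact hzu hh1e.symm
    exact ⟨⟨e, hh1e, ha ▸ hae, hwz⟩, ⟨e, h2e.trans hh1e, ha ▸ hae, hwz⟩⟩
  have hstep2 : ∀ z, R u z → z ≠ u →
      (Arc 𝓔 h1 u z ∧ Arc 𝓔 h2 u z) ∨ (Arc 𝓔 h1 v z ∧ Arc 𝓔 h2 v z) := by
    rintro z ⟨hwz, e, hhead, a, hae, hqa⟩ hzu
    have hzv : z ≠ v := hhead ▸ hq_ne_v (h1 e)
    have hh1e : h1 e = z := by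
      rcases hq_eq (h1 e) with hq1 | hq1
      · rw [← hhead, hq1]
      · rw [hq1, hqv] at hhead; exact absurd hhead.symm hzu
    have h2e : h2 e = h1 e := by
      rw [h2eq]
      apply if_neg
      rintro ⟨-, -, hcon⟩
      rw [hcon] at hh1e
      exact hzu hh1e.symm
    rcases hq_eq a with hq1 | hq1
    · have ha : a = u := by rw [← hqa, hq1]
      subst ha
      exact Or.inl ⟨⟨e, hh1e, hae, fun hh => hzu hh.symm⟩,
        ⟨e, h2e.trans hh1e, hae, fun hh => hzu hh.symm⟩⟩
    · subst hq1
      exact Or.inr ⟨⟨e, hh1e, hae, fun hh => hzv hh.symm⟩,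
        ⟨e, h2e.trans hh1e, hae, fun hh => hzv hh.symm⟩⟩
  have hstep3 : ∀ w, R w u →
      (Arc 𝓔 h2 w v ∨ Arc 𝓔 h2 w u) ∧ (Arc 𝓔 h1 w u ∨ Arc 𝓔 h1 w v) := by
    rintro w ⟨hwz, e, hhead, a, hae, hqa⟩
    have hwu : w ≠ u := hwz
    have hwv : w ≠ v := hqa ▸ hq_ne_v a
    have ha : a = w := by
      rcases hq_eq a with hq1 | hq1
      · rw [← hqa, hq1]
      · rw [hq1, hqv] at hqa; exact absurd hqa.symm hwu
    subst ha
    rcases hq_eq (h1 e) with hq1 | hq1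
    · have hh1e : h1 e = u := by rw [← hhead, hq1]
      by_cases hve : v ∈ e.1
      · have h2e : h2 e = v := by
          rw [h2eq, if_pos ⟨hh1e ▸ hac1.1 e, hve, hh1e⟩]
        exact ⟨Or.inl ⟨e, h2e, hae, hwv⟩, Or.inl ⟨e, hh1e, hae, hwu⟩⟩
      · have h2e : h2 e = h1 e := by
          rw [h2eq]; exact if_neg (fun hcon => hve hcon.2.1)
        exact ⟨Or.inr ⟨e, h2e.trans hh1e, hae, hwu⟩, Or.inl ⟨e, hh1e, hae, hwu⟩⟩
    · have hh1e : h1 e = v := hq1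
      have hue : u ∉ e.1 := hnohead e hh1e
      have h2e : h2 e = h1 e := by
        rw [h2eq]; exact if_neg (fun hcon => hue hcon.1)
      exact ⟨Or.inl ⟨e, h2e.trans hh1e, hae, hwv⟩, Or.inr ⟨e, hh1e, hae, hwv⟩⟩
  -- irreflexivity of the quotient relation
  have hRirr : ∀ p, ¬ Relation.TransGen R p p := by
    intro p hcyc
    rcases cycle_split u hcyc with ⟨qq, hqq⟩ | hu
    · exact hac2.2 qq
        (Relation.TransGen.mono (r := fun a b => R a b ∧ a ≠ u ∧ b ≠ u) (p := Arc 𝓔 h2) (fun a b hab => (hstep1 a b hab.1 hab.2.1 hab.2.2).2) _ _ hqq)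
    · have claim : ∀ z, Relation.TransGen R u z → z ≠ u ∧
          ((Relation.TransGen (Arc 𝓔 h1) u z ∧ Relation.TransGen (Arc 𝓔 h2) u z) ∨
           (Relation.TransGen (Arc 𝓔 h1) v z ∧ Relation.TransGen (Arc 𝓔 h2) v z)) := by
        intro z hz
        induction hz with
        | single hs =>
          rename_i z'
          have hz'u : z' ≠ u := Ne.symm hs.1
          refine ⟨hz'u, ?_⟩
          rcases hstep2 z' hs hz'u with ⟨ha1, ha2⟩ | ⟨ha1, ha2⟩
          · exact Or.inl ⟨Relation.TransGen.single ha1, Relation.TransGen.single ha2⟩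
          · exact Or.inr ⟨Relation.TransGen.single ha1, Relation.TransGen.single ha2⟩
        | tail hz' hs ih =>
          rename_i b c'
          obtain ⟨hbu, hcore⟩ := ih
          by_cases hcu : c' = u
          · exfalso
            rw [hcu] at hs
            obtain ⟨hA2, hA1⟩ := hstep3 b hs
            rcases hcore with ⟨hA1ub, hA2ub⟩ | ⟨hA1vb, hA2vb⟩
            · rcases hA1 with hbu' | hbv'
              · exact hac1.2 u (hA1ub.tail hbu')
              · exact hac1.2 u ((hA1ub.tail hbv').tail harc_vu)
            · rcases hA2 with hbv' | hbu'
              · exact hac2.2 v (hA2vb.tail hbv')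
              · exact hac2.2 v ((hA2vb.tail hbu').tail hA2uv)
          · refine ⟨hcu, ?_⟩
            obtain ⟨ha1, ha2⟩ := hstep1 b c' hs hbu hcu
            rcases hcore with ⟨x1, x2⟩ | ⟨x1, x2⟩
            · exact Or.inl ⟨x1.tail ha1, x2.tail ha2⟩
            · exact Or.inr ⟨x1.tail ha1, x2.tail ha2⟩
      exact (claim u hu).1 rfl
  -- construct the tied objective
  obtain ⟨ρ, hρ⟩ := rank_exists R hRirr
  set tie : Fin n → ℕ := fun w => if w = u ∨ w = v then n else w.val with htie
  have htie_le : ∀ w, tie w ≤ n := by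
    intro w
    by_cases hw : w = u ∨ w = v
    · simp [htie, hw]
    · simp only [htie, if_neg hw]
      exact le_of_lt w.isLt
  set cf : Fin n → ℕ := fun w => (n+1) * ρ (q w) + tie w with hcf
  set c : Fin n → ℝ := fun w => (cf w : ℝ) with hc
  have hcuv : c u = c v := by
    rw [hc]; simp only [hcf, htie]
    rw [hqu, hqv]
    norm_num
  have hlevel : ∀ w z, c w = c z → w = z ∨ ((w = u ∨ w = v) ∧ (z = u ∨ z = v)) := by
    intro w z hwz
    have hcf' : cf w = cf z := Nat.cast_injective hwz
    rw [hcf] at hcf'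
    simp only at hcf'
    have hρeq : ρ (q w) = ρ (q z) := by
      rcases lt_trichotomy (ρ (q w)) (ρ (q z)) with hlt | heq | hgt
      · exact absurd hcf' (Nat.ne_of_lt (nat_step_lt hlt (htie_le w)))
      · exact heq
      · exact absurd hcf'.symm (Nat.ne_of_lt (nat_step_lt hgt (htie_le z)))
    rw [hρeq] at hcf'
    have htieeq : tie w = tie z := Nat.add_left_cancel hcf'
    rw [htie] at htieeq
    simp only at htieeq
    by_cases hw : w = u ∨ w = v <;> by_cases hz : z = u ∨ z = v
    · exact Or.inr ⟨hw, hz⟩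
    · rw [if_pos hw, if_neg hz] at htieeq
      exact absurd htieeq.symm (Nat.ne_of_lt z.isLt)
    · rw [if_neg hw, if_pos hz] at htieeq
      exact absurd htieeq (Nat.ne_of_lt w.isLt)
    · rw [if_neg hw, if_neg hz] at htieeq
      exact Or.inl (Fin.ext htieeq)
  have hcompat1 : ∀ e : Edge 𝓔, ∀ w ∈ e.1, c w ≤ c (h1 e) := by
    intro e w hw
    by_cases hqq : q w = q (h1 e)
    · rcases hq_merge w (h1 e) hqq with hww | ⟨hwp, hhp⟩
      · rw [hww]
      · have : tie w = tie (h1 e) := by rw [htie]; simp only [if_pos hwp, if_pos hhp]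
        rw [hc]; simp only [hcf]
        rw [hqq, this]
    · have hRwh : R (q w) (q (h1 e)) := ⟨hqq, e, rfl, w, hw, rfl⟩
      have hlt := nat_step_lt (t := tie (h1 e)) (hρ _ _ hRwh) (htie_le w)
      rw [hc]; simp only [hcf]
      exact_mod_cast le_of_lt hlt
  have hcompat2 : ∀ e : Edge 𝓔, ∀ w ∈ e.1, c w ≤ c (h2 e) := by
    intro e w hw
    rw [h2eq]
    by_cases hcond : u ∈ e.1 ∧ v ∈ e.1 ∧ h1 e = u
    · rw [if_pos hcond, ← hcuv, ← hcond.2.2]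
      exact hcompat1 e w hw
    · rw [if_neg hcond]
      exact hcompat1 e w hw
  -- head counts
  set x1 := headCountVector n 𝓔 h1 with hx1
  set x2 := headCountVector n 𝓔 h2 with hx2
  have hx1P : x1 ∈ hypergraphicPolytope n 𝓔 := headCount_mem_polytope hE hac1.1
  have hx2P : x2 ∈ hypergraphicPolytope n 𝓔 := headCount_mem_polytope hE hac2.1
  have hx1B : ∑ w, c w * x1 w = ∑ e : Edge 𝓔, Mc c e := dot_eq_bound hac1.1 hcompat1
  have hx2B : ∑ w, c w * x2 w = ∑ e : Edge 𝓔, Mc c e := dot_eq_bound hac2.1 hcompat2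
  have hcard : ((univ : Finset (Edge 𝓔)).filter fun e => h2 e = u).card
      < ((univ : Finset (Edge 𝓔)).filter fun e => h1 e = u).card := by
    apply Finset.card_lt_card
    rw [Finset.ssubset_iff_of_subset]
    · refine ⟨e0, mem_filter.mpr ⟨mem_univ _, he0h⟩, ?_⟩
      simp only [mem_filter, mem_univ, true_and]
      rw [he0f]
      exact Ne.symm huv
    · intro e he
      simp only [mem_filter, mem_univ, true_and] at he ⊢
      rw [h2eq] at he
      by_cases hcond : u ∈ e.1 ∧ v ∈ e.1 ∧ h1 e = u
      · rw [if_pos hcond] at he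
        exact absurd he (Ne.symm huv)
      · rw [if_neg hcond] at he
        exact he
  have h21u : x2 u < x1 u := by
    show (( ((univ : Finset (Edge 𝓔)).filter fun e => h2 e = u).card : ℕ) : ℝ)
        < (( ((univ : Finset (Edge 𝓔)).filter fun e => h1 e = u).card : ℕ) : ℝ)
    exact_mod_cast hcard
  have hne12 : x1 ≠ x2 := fun hcon => absurd (congrFun hcon u) (ne_of_gt h21u)
  refine ⟨hne12, ?_⟩
  have hface := isExtreme_face (A := hypergraphicPolytope n 𝓔) c (∑ e : Edge 𝓔, Mc c e)
    (fun y hy => (key hE hy _ c le_rfl).1)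
  have hseg : {y | y ∈ hypergraphicPolytope n 𝓔 ∧
        ∑ w, c w * y w = ∑ e : Edge 𝓔, Mc c e} = segment ℝ x1 x2 := by
    apply Set.eq_of_subset_of_subset
    · rintro x ⟨hxP, hxB⟩
      have htx : ∀ U : Finset (Fin n), CU c U → ∑ i ∈ U, x i = fH n 𝓔 U :=
        (key hE hxP _ c le_rfl).2 hxB
      have htx1 : ∀ U : Finset (Fin n), CU c U → ∑ i ∈ U, x1 i = fH n 𝓔 U :=
        fun U hU => compat_tight hac1.1 hcompat1 hU
      have htx2 : ∀ U : Finset (Fin n), CU c U → ∑ i ∈ U, x2 i = fH n 𝓔 U :=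
        fun U hU => compat_tight hac2.1 hcompat2 hU
      have hcoord : ∀ w, w ≠ u → w ≠ v → x w = x1 w ∧ x2 w = x1 w := by
        intro w hwu hwv
        have hlev : ((univ : Finset (Fin n)).filter fun z => c z = c w) = {w} := by
          ext z
          simp only [mem_filter, mem_univ, true_and, mem_singleton]
          constructor
          · intro hz
            rcases hlevel z w hz with h' | ⟨-, hw'⟩
            · exact h'
            · rcases hw' with h' | h'
              · exact absurd h' hwu
              · exact absurd h' hwv
          · intro hz; rw [hz]
        constructor
        · have d1 := (tight_sub htx w).trans (tight_sub htx1 w).symm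
          rw [level_sum, level_sum, hlev] at d1
          simpa using d1
        · have d2 := (tight_sub htx2 w).trans (tight_sub htx1 w).symm
          rw [level_sum, level_sum, hlev] at d2
          simpa using d2
      have hlevuv : ((univ : Finset (Fin n)).filter fun z => c z = c u) = {u, v} := by
        ext z
        simp only [mem_filter, mem_univ, true_and, mem_insert, mem_singleton]
        constructor
        · intro hz
          rcases hlevel z u hz with h' | ⟨hz', -⟩
          · exact Or.inl h'
          · exact hz'
        · rintro (rfl | rfl)
          · rfl
          · exact hcuv.symm
      have hpair1 : x u + x v = x1 u + x1 v := by
        have d := (tight_sub htx u).trans (tight_sub htx1 u).symm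
        rw [level_sum, level_sum, hlevuv, Finset.sum_pair huv, Finset.sum_pair huv] at d
        exact d
      have hpair2 : x2 u + x2 v = x1 u + x1 v := by
        have d := (tight_sub htx2 u).trans (tight_sub htx1 u).symm
        rw [level_sum, level_sum, hlevuv, Finset.sum_pair huv, Finset.sum_pair huv] at d
        exact d
      set A : Finset (Fin n) := univ.filter (fun z => c u < c z) with hA
      have hAcu : CU c A := by
        intro i hi j hj
        simp only [hA, mem_filter, mem_univ, true_and] at hi hj
        exact lt_of_le_of_lt (not_lt.mp hj) hi
      have hAx := htx A hAcu
      have hAx1 := htx1 A hAcu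
      have hAx2 := htx2 A hAcu
      have huA : u ∉ A := by simp [hA]
      have hxu : x u ≤ x1 u := by
        have hcons := hxP.1 (insert u A)
        have ht1 : ∑ i ∈ insert u A, x1 i = fH n 𝓔 (insert u A) := by
          apply tight_of_headsIn hac1.1
          rintro e ⟨w, hw⟩
          obtain ⟨hwU, hwe⟩ := mem_inter.mp hw
          have hcw : c u ≤ c w := by
            rcases mem_insert.mp hwU with rfl | hwA
            · exact le_refl _
            · exact le_of_lt (by simpa [hA] using hwA)
          have hche : c u ≤ c (h1 e) := le_trans hcw (hcompat1 e w hwe)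
          rcases lt_or_eq_of_le hche with hlt | heqc
          · exact mem_insert_of_mem (mem_filter.mpr ⟨mem_univ _, hlt⟩)
          · rcases hlevel (h1 e) u heqc.symm with h' | ⟨hp, -⟩
            · rw [h']; exact mem_insert_self u A
            · rcases hp with h' | h'
              · rw [h']; exact mem_insert_self u A
              · exfalso
                have hue : u ∉ e.1 := hnohead e h'
                rcases mem_insert.mp hwU with rfl | hwA
                · exact hue hwe
                · have hlt : c u < c w := by simpa [hA] using hwA
                  have hle := hcompat1 e w hwe
                  rw [h', ← hcuv] at hle
                  linarith
        have hsx : ∑ i ∈ insert u A, x i = x u + ∑ i ∈ A, x i := Finset.sum_insert huA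
        have hsx1 : ∑ i ∈ insert u A, x1 i = x1 u + ∑ i ∈ A, x1 i := Finset.sum_insert huA
        rw [hsx] at hcons
        rw [hsx1] at ht1
        rw [← ht1] at hcons
        linarith [hAx, hAx1]
      have hvA : v ∉ A := by
        simp only [hA, mem_filter, mem_univ, true_and, not_lt, ← hcuv]
        exact le_refl _
      have hxv : x v ≤ x2 v := by
        have hcons := hxP.1 (insert v A)
        have ht2 : ∑ i ∈ insert v A, x2 i = fH n 𝓔 (insert v A) := by
          apply tight_of_headsIn hac2.1
          rintro e ⟨w, hw⟩
          obtain ⟨hwU, hwe⟩ := mem_inter.mp hw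
          have hcw : c u ≤ c w := by
            rcases mem_insert.mp hwU with rfl | hwA
            · exact le_of_eq hcuv
            · exact le_of_lt (by simpa [hA] using hwA)
          have hche : c u ≤ c (h2 e) := le_trans hcw (hcompat2 e w hwe)
          rcases lt_or_eq_of_le hche with hlt | heqc
          · exact mem_insert_of_mem (mem_filter.mpr ⟨mem_univ _, hlt⟩)
          · rcases hlevel (h2 e) u heqc.symm with h' | ⟨hp, -⟩
            · -- h2 e = u : contradiction
              exfalso
              have hcond : ¬(u ∈ e.1 ∧ v ∈ e.1 ∧ h1 e = u) := by
                intro hcond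
                have : h2 e = v := by rw [h2eq, if_pos hcond]
                rw [this] at h'
                exact huv h'.symm
              have hh1e : h1 e = u := by
                have := h2eq e
                rw [if_neg hcond] at this
                rw [← this, h']
              have hve : v ∉ e.1 := fun hv' => hcond ⟨hh1e ▸ hac1.1 e, hv', hh1e⟩
              rcases mem_insert.mp hwU with rfl | hwA
              · exact hve hwe
              · have hlt : c u < c w := by simpa [hA] using hwA
                have hle := hcompat2 e w hwe
                rw [h'] at hle
                linarith
            · rcases hp with h' | h'
              · exfalso
                -- same as above: h2 e = u
                have hcond : ¬(u ∈ e.1 ∧ v ∈ e.1 ∧ h1 e = u) := by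
                  intro hcond
                  have : h2 e = v := by rw [h2eq, if_pos hcond]
                  rw [this] at h'
                  exact huv h'.symm
                have hh1e : h1 e = u := by
                  have := h2eq e
                  rw [if_neg hcond] at this
                  rw [← this, h']
                have hve : v ∉ e.1 := fun hv' => hcond ⟨hh1e ▸ hac1.1 e, hv', hh1e⟩
                rcases mem_insert.mp hwU with rfl | hwA
                · exact hve hwe
                · have hlt : c u < c w := by simpa [hA] using hwA
                  have hle := hcompat2 e w hwe
                  rw [h'] at hle
                  linarith
              · rw [h']; exact mem_insert_self v A
        have hsx : ∑ i ∈ insert v A, x i = x v + ∑ i ∈ A, x i := Finset.sum_insert hvA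
        have hsx2 : ∑ i ∈ insert v A, x2 i = x2 v + ∑ i ∈ A, x2 i := Finset.sum_insert hvA
        rw [hsx] at hcons
        rw [hsx2] at ht2
        rw [← ht2] at hcons
        linarith [hAx, hAx2]
      have hxu2 : x2 u ≤ x u := by linarith
      set t : ℝ := (x1 u - x u) / (x1 u - x2 u) with htdef
      have htD : t * (x1 u - x2 u) = x1 u - x u :=
        div_mul_cancel₀ _ (ne_of_gt (by linarith))
      have ht0 : 0 ≤ t := div_nonneg (by linarith) (by linarith)
      have ht1' : t ≤ 1 := by
        rw [htdef, div_le_one (by linarith)]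
        linarith
      refine ⟨1 - t, t, by linarith, ht0, by ring, ?_⟩
      funext w
      simp only [Pi.add_apply, Pi.smul_apply, smul_eq_mul]
      by_cases hwu : w = u
      · subst hwu
        linear_combination -htD
      · by_cases hwv : w = v
        · subst hwv
          have hx2v : x2 w = x1 u + x1 w - x2 u := by linarith
          have hxv' : x w = x1 u + x1 w - x u := by linarith
          rw [hx2v, hxv']
          linear_combination htD
        · obtain ⟨hc1, hc2⟩ := hcoord w hwu hwv
          rw [hc1, hc2]
          ring
    · rintro x ⟨a, b, ha, hb, hab, hcomb⟩
      constructor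
      · have := polytope_convex hx1P hx2P ha hb hab
        rwa [hcomb] at this
      · rw [← hcomb, dot_combo, hx1B, hx2B]
        linear_combination (∑ e : Edge 𝓔, Mc c e) * hab
  rw [← hseg]
  exact hface


lemma adjacent_flip (hE : ∀ e ∈ 𝓔, e.Nonempty) {h1 h2 : Edge 𝓔 → Fin n}
    (hac1 : IsAcyclic 𝓔 h1) (hac2 : IsAcyclic 𝓔 h2)
    (hne : headCountVector n 𝓔 h1 ≠ headCountVector n 𝓔 h2)
    (hext : IsExtreme ℝ (hypergraphicPolytope n 𝓔)
      (segment ℝ (headCountVector n 𝓔 h1) (headCountVector n 𝓔 h2))) :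
    ∃ u v : Fin n, u ≠ v ∧ h2 ≠ h1 ∧ h2 = flip 𝓔 h1 u v := by
  classical
  set x1 := headCountVector n 𝓔 h1 with hx1
  set x2 := headCountVector n 𝓔 h2 with hx2
  have hx1P : x1 ∈ hypergraphicPolytope n 𝓔 := headCount_mem_polytope hE hac1.1
  have hx2P : x2 ∈ hypergraphicPolytope n 𝓔 := headCount_mem_polytope hE hac2.1
  have hdiffex : ∃ e : Edge 𝓔, h1 e ≠ h2 e := by
    by_contra hcon
    push_neg at hcon
    exact hne (by rw [hx1, hx2, funext hcon])
  -- each difference edge moves heads along the same direction x2 - x1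
  have hkey : ∀ e : Edge 𝓔, h1 e ≠ h2 e → ∃ t : ℝ, 0 < t ∧ ∀ w,
      (if h2 e = w then (1:ℝ) else 0) - (if h1 e = w then 1 else 0) = t * (x2 w - x1 w) := by
    intro e hd
    set d : Fin n → ℝ := fun w => (if h2 e = w then (1:ℝ) else 0) - (if h1 e = w then 1 else 0)
      with hdd
    set y := headCountVector n 𝓔 (Function.update h1 e (h2 e)) with hy
    set z := headCountVector n 𝓔 (Function.update h2 e (h1 e)) with hz
    have hyw : ∀ w, y w = x1 w + d w := by
      intro w
      rw [hy, headCount_update, hdd, ← hx1]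
      ring
    have hzw : ∀ w, z w = x2 w - d w := by
      intro w
      rw [hz, headCount_update, hdd, ← hx2]
      ring
    have hyP : y ∈ hypergraphicPolytope n 𝓔 := by
      apply headCount_mem_polytope hE
      intro e'
      by_cases he' : e' = e
      · rw [he', Function.update_self]; exact hac2.1 e
      · rw [Function.update_of_ne he']; exact hac1.1 e'
    have hzP : z ∈ hypergraphicPolytope n 𝓔 := by
      apply headCount_mem_polytope hE
      intro e'
      by_cases he' : e' = e
      · rw [he', Function.update_self]; exact hac1.1 e
      · rw [Function.update_of_ne he']; exact hac2.1 e'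
    have hd2 : d (h2 e) = 1 := by
      simp [hdd, hd]
    by_cases hyz : y = z
    · refine ⟨1/2, by norm_num, fun w => ?_⟩
      have hw := congrFun hyz w
      rw [hyw, hzw] at hw
      have hdw : d w = 1/2 * (x2 w - x1 w) := by linear_combination hw / 2
      simpa [hdd] using hdw
    · have hmemseg : (1/2 : ℝ) • y + (1/2 : ℝ) • z ∈ segment ℝ x1 x2 := by
        refine ⟨1/2, 1/2, by norm_num, by norm_num, by norm_num, ?_⟩
        funext w
        simp only [Pi.add_apply, Pi.smul_apply, smul_eq_mul]
        rw [hyw, hzw]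
        ring
      have hopen : (1/2 : ℝ) • y + (1/2 : ℝ) • z ∈ openSegment ℝ y z :=
        ⟨1/2, 1/2, by norm_num, by norm_num, by norm_num, rfl⟩
      have hyseg := hext.2 hyP hzP hmemseg hopen
      obtain ⟨a, b, ha, hb, hab, hyy⟩ := hyseg
      refine ⟨b, ?_, ?_⟩
      · rcases lt_or_eq_of_le hb with hb' | hb'
        · exact hb'
        · exfalso
          have ha1 : a = 1 := by linarith
          have := congrFun hyy (h2 e)
          rw [ha1, ← hb', hyw] at this
          simp only [one_smul, zero_smul, Pi.add_apply, Pi.zero_apply, Pi.smul_apply,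
            smul_eq_mul] at this
          rw [hd2] at this
          linarith
      · intro w
        have hthis := congrFun hyy w
        simp only [Pi.add_apply, Pi.smul_apply, smul_eq_mul] at hthis
        rw [hyw w] at hthis
        have ha' : a = 1 - b := by linarith
        rw [ha'] at hthis
        linear_combination (-1 : ℝ) * hthis
  obtain ⟨eb, hdeb⟩ := hdiffex
  obtain ⟨t0, ht0, hdt0⟩ := hkey eb hdeb
  set u := h1 eb with hu
  set v := h2 eb with hv
  have huv : u ≠ v := hdeb
  -- all difference edges have the same heads
  have hsame : ∀ e : Edge 𝓔, h1 e ≠ h2 e → h1 e = u ∧ h2 e = v := by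
    intro e hd
    obtain ⟨s, hs, hds⟩ := hkey e hd
    have hcomb : ∀ w, t0 * ((if h2 e = w then (1:ℝ) else 0) - (if h1 e = w then 1 else 0))
        = s * ((if v = w then (1:ℝ) else 0) - (if u = w then 1 else 0)) := by
      intro w
      rw [hds w, hdt0 w]
      ring
    have hvx := hcomb v
    rw [if_pos rfl, if_neg huv] at hvx
    have h2ev : h2 e = v := by
      by_cases hA : h2 e = v
      · exact hA
      · exfalso
        by_cases hB : h1 e = v
        · rw [if_neg hA, if_pos hB] at hvx
          nlinarith
        · rw [if_neg hA, if_neg hB] at hvx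
          nlinarith
    have h1ev : h1 e ≠ v := fun hB => hd (hB.trans h2ev.symm)
    have hux := hcomb u
    rw [if_neg (Ne.symm huv), if_pos rfl] at hux
    have h1eu : h1 e = u := by
      by_cases hB : h1 e = u
      · exact hB
      · exfalso
        by_cases hA : h2 e = u
        · rw [if_pos hA, if_neg hB] at hux
          nlinarith
        · rw [if_neg hA, if_neg hB] at hux
          nlinarith
    exact ⟨h1eu, h2ev⟩
  have hflip : h2 = flip 𝓔 h1 u v := by
    funext e
    show h2 e = if u ∈ e.1 ∧ v ∈ e.1 ∧ h1 e = u then v else h1 e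
    by_cases hd : h1 e = h2 e
    · by_cases hcond : u ∈ e.1 ∧ v ∈ e.1 ∧ h1 e = u
      · exfalso
        -- an unflipped edge containing both ends blows up extremality
        have hh2e : h2 e = u := hd.symm.trans hcond.2.2
        set g := Function.update h2 e v with hg
        have hgor : IsOrientation 𝓔 g := by
          intro e'
          by_cases he' : e' = e
          · rw [hg, he', Function.update_self]; exact hcond.2.1
          · rw [hg, Function.update_of_ne he']; exact hac2.1 e'
        have hgP := headCount_mem_polytope hE hgor
        set xg := headCountVector n 𝓔 g with hxg
        have hgw : ∀ w, xg w = x2 w + t0 * (x2 w - x1 w) := by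
          intro w
          rw [hxg, hg, headCount_update, ← hx2, hh2e]
          have hdt := hdt0 w
          linarith
        have h1t : (1:ℝ) + t0 ≠ 0 := by linarith
        have hx2open : x2 ∈ openSegment ℝ x1 xg := by
          refine ⟨t0/(1+t0), 1/(1+t0), div_pos ht0 (by linarith),
            div_pos one_pos (by linarith), by field_simp; ring, ?_⟩
          funext w
          simp only [Pi.add_apply, Pi.smul_apply, smul_eq_mul]
          rw [hgw w]
          field_simp
          ring
        have hgseg := hext.right_mem_of_mem_openSegment hx1P hgP (right_mem_segment ℝ x1 x2) hx2open
        obtain ⟨a, b, ha, hb, hab, hgeq⟩ := hgseg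
        obtain ⟨w0, hw0⟩ : ∃ w, x2 w ≠ x1 w := by
          by_contra hcon
          push_neg at hcon
          exact hne (funext fun w => (hcon w).symm)
        have hthis := congrFun hgeq w0
        simp only [Pi.add_apply, Pi.smul_apply, smul_eq_mul] at hthis
        rw [hgw w0] at hthis
        have ha' : a = 1 - b := by linarith
        rw [ha'] at hthis
        have hfac : (b - 1 - t0) * (x2 w0 - x1 w0) = 0 := by linear_combination hthis
        rcases mul_eq_zero.mp hfac with hf | hf
        · linarith
        · exact hw0 (by linarith)
      · rw [if_neg hcond]
        exact hd.symm
    · obtain ⟨hh1, hh2⟩ := hsame e hd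
      rw [if_pos ⟨hh1 ▸ hac1.1 e, hh2 ▸ hac2.1 e, hh1⟩]
      exact hh2
  exact ⟨u, v, huv, fun hcon => hne (by rw [hx1, hx2, hcon]), hflip⟩

theorem hypergraphicPolytope_vertices_and_adjacency' (hE : ∀ e ∈ 𝓔, e.Nonempty) :
    Set.BijOn (headCountVector n 𝓔) {h : Edge 𝓔 → Fin n | IsAcyclic 𝓔 h}
      ((hypergraphicPolytope n 𝓔).extremePoints ℝ) ∧
    ∀ h₁ h₂ : Edge 𝓔 → Fin n, IsAcyclic 𝓔 h₁ → IsAcyclic 𝓔 h₂ →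
      ((headCountVector n 𝓔 h₁ ≠ headCountVector n 𝓔 h₂ ∧
          IsExtreme ℝ (hypergraphicPolytope n 𝓔)
            (segment ℝ (headCountVector n 𝓔 h₁) (headCountVector n 𝓔 h₂))) ↔
        ∃ u v : Fin n, u ≠ v ∧ h₂ ≠ h₁ ∧
          (h₂ = flip 𝓔 h₁ u v ∨ h₂ = flip 𝓔 h₁ v u)) := by
  constructor
  · refine ⟨fun h hh => acyclic_extremePoint hE hh,
      fun g1 hg1 g2 hg2 heq => headCount_injOn hg1 hg2 heq,
      fun x hx => ?_⟩
    obtain ⟨h, hac, hhx⟩ := extreme_surj hE hx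
    exact ⟨h, hac, hhx⟩
  · intro h1 h2 hac1 hac2
    constructor
    · rintro ⟨hneq, hext⟩
      obtain ⟨u, v, huv, hne21, hfl⟩ := adjacent_flip hE hac1 hac2 hneq hext
      exact ⟨u, v, huv, hne21, Or.inl hfl⟩
    · rintro ⟨u, v, huv, hne21, (hfl | hfl)⟩
      · subst hfl
        exact flip_segment_extreme hE hac1 hac2 hne21 huv
      · subst hfl
        exact flip_segment_extreme hE hac1 hac2 hne21 huv.symm

/-- The head-count map is a bijection from the acyclic orientations of
`H` onto the vertex set (extreme points) of `P_H`; moreover two vertices corresponding to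
acyclic orientations `h₁, h₂` are adjacent on the skeleton of `P_H` iff `h₁` and `h₂` are
obtained from each other by flipping a pair `{u, v}` of distinct vertices. -/
theorem hypergraphicPolytope_vertices_and_adjacency (n : ℕ) (𝓔 : Finset (Finset (Fin n)))
    (hE : ∀ e ∈ 𝓔, e.Nonempty) :
    Set.BijOn (headCountVector n 𝓔) {h : Edge 𝓔 → Fin n | IsAcyclic 𝓔 h}
      ((hypergraphicPolytope n 𝓔).extremePoints ℝ) ∧
    ∀ h₁ h₂ : Edge 𝓔 → Fin n, IsAcyclic 𝓔 h₁ → IsAcyclic 𝓔 h₂ →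
      ((headCountVector n 𝓔 h₁ ≠ headCountVector n 𝓔 h₂ ∧
          IsExtreme ℝ (hypergraphicPolytope n 𝓔)
            (segment ℝ (headCountVector n 𝓔 h₁) (headCountVector n 𝓔 h₂))) ↔
        ∃ u v : Fin n, u ≠ v ∧ h₂ ≠ h₁ ∧
          (h₂ = flip 𝓔 h₁ u v ∨ h₂ = flip 𝓔 h₁ v u)) :=
  hypergraphicPolytope_vertices_and_adjacency' hE

end PaperFlip
end

section
/- Every sequence of flips transforming the acyclic orientation h₁ of the star gadget into the acyclic orientation h₂, in which no flipped pair contains the center vertex 0, has length at least 15. -/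
/-!
A hypergraph on vertex type `V` is given by a finite collection `𝓔` of nonempty
hyperedges (finsets of `V`).  An orientation assigns to each hyperedge a head
belonging to it.  `Arc 𝓔 h u v` is the arc relation of the digraph `D_h`, and an
orientation is acyclic if `D_h` has no directed cycle.  `flip 𝓔 h u v` is the
orientation `h^{(u,v)}`, and `(u, v)` is flippable in `h` if `h^{(u,v)}` is acyclic.
-/

namespace PaperFlip

variable {V : Type*} [DecidableEq V]

/-- The star gadget: the hypergraph on `{0, 1, …, 6}` with hyperedges `{0, i}` for
`i ∈ {1,…,6}` and `{0, i, j}` for distinct `i, j ∈ {1,…,6}`. -/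
def starEdges : Finset (Finset (Fin 7)) :=
  Finset.univ.filter fun e =>
    (∃ i : Fin 7, i ≠ 0 ∧ e = {0, i}) ∨
    (∃ i j : Fin 7, i ≠ 0 ∧ j ≠ 0 ∧ i ≠ j ∧ e = {0, i, j})

/-- The orientation `h₁` of the star gadget: `{0,i}` has head `i`, and `{0,i,j}` has
head `min(i,j)`; equivalently, every hyperedge gets the minimum of its nonzero
elements as head. -/
def starOrient₁ : Edge starEdges → Fin 7 := fun e => WithTop.untopD 0 ((e.1.erase 0).min)

/-- The orientation `h₂` of the star gadget: `{0,i}` has head `i`, and `{0,i,j}` has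
head `max(i,j)`; equivalently, every hyperedge gets the maximum of its nonzero
elements as head. -/
def starOrient₂ : Edge starEdges → Fin 7 := fun e => WithBot.unbotD 0 ((e.1.erase 0).max)

lemma mem_starEdges_cases {e : Finset (Fin 7)} (he : e ∈ starEdges)
    {u v : Fin 7} (hu : u ≠ 0) (hv : v ≠ 0) (huv : u ≠ v)
    (hue : u ∈ e) (hve : v ∈ e) : e = {0, u, v} := by
  simp only [starEdges, Finset.mem_filter] at he
  obtain ⟨-, he⟩ := he
  rcases he with ⟨i, hi, rfl⟩ | ⟨i, j, hi, hj, hij, rfl⟩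
  · simp only [Finset.mem_insert, Finset.mem_singleton] at hue hve
    rcases hue with rfl | rfl
    · exact absurd rfl hu
    · rcases hve with rfl | rfl
      · exact absurd rfl hv
      · exact absurd rfl huv
  · simp only [Finset.mem_insert, Finset.mem_singleton] at hue hve
    rcases hue with rfl | rfl | rfl
    · exact absurd rfl hu
    · rcases hve with rfl | rfl | rfl
      · exact absurd rfl hv
      · exact absurd rfl huv
      · rfl
    · rcases hve with rfl | rfl | rfl
      · exact absurd rfl hv
      · show ({0, v, u} : Finset (Fin 7)) = {0, u, v}
        rw [Finset.pair_comm]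
      · exact absurd rfl huv

lemma flip_card_le_one (h : Edge starEdges → Fin 7) (u v : Fin 7)
    (hu : u ≠ 0) (hv : v ≠ 0) (huv : u ≠ v) :
    (Finset.univ.filter fun e : Edge starEdges =>
      flip starEdges h u v e ≠ h e).card ≤ 1 := by
  refine Finset.card_le_one.mpr ?_
  have val_eq : ∀ a ∈ Finset.univ.filter fun e : Edge starEdges =>
      flip starEdges h u v e ≠ h e, a.1 = ({0, u, v} : Finset (Fin 7)) := by
    intro a ha
    simp only [Finset.mem_filter, flip] at ha
    by_cases hc : u ∈ a.1 ∧ v ∈ a.1 ∧ h a = u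
    · exact mem_starEdges_cases a.2 hu hv huv hc.1 hc.2.1
    · simp [hc] at ha
      exact absurd ⟨ha.1, ha.2.1, ha.2.2.1⟩ hc
  intro a ha b hb
  exact Subtype.ext ((val_eq a ha).trans (val_eq b hb).symm)

/-- Every flip sequence transforming `h₁` into `h₂` on the star gadget
in which no flipped pair contains the center vertex `0` has length at least `15`. -/
theorem star_gadget_avoid_center_flip_seq_length (ℓ : ℕ)
    (g : ℕ → Edge starEdges → Fin 7) (u v : ℕ → Fin 7)
    (h0 : g 0 = starOrient₁) (hend : g ℓ = starOrient₂)
    (hflip : ∀ i < ℓ, Flippable starEdges (g i) (u i) (v i) ∧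
      g (i + 1) = flip starEdges (g i) (u i) (v i) ∧ g (i + 1) ≠ g i)
    (havoid : ∀ i < ℓ, u i ≠ 0 ∧ v i ≠ 0) :
    15 ≤ ℓ := by
  have key : ∀ n, n ≤ ℓ → hammingDist (g 0) (g n) ≤ n := by
    intro n
    induction n with
    | zero => simp
    | succ n ih =>
      intro hn
      have h1 := ih (Nat.le_of_succ_le hn)
      obtain ⟨hf, hgeq, -⟩ := hflip n (Nat.lt_of_succ_le hn)
      obtain ⟨hu, hv⟩ := havoid n (Nat.lt_of_succ_le hn)
      have h2 : hammingDist (g n) (g (n + 1)) ≤ 1 := by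
        rw [hgeq, hammingDist_comm]
        exact flip_card_le_one _ _ _ hu hv hf.1
      calc hammingDist (g 0) (g (n + 1))
          ≤ hammingDist (g 0) (g n) + hammingDist (g n) (g (n + 1)) :=
            hammingDist_triangle _ _ _
        _ ≤ n + 1 := by omega
  have hbase : 15 ≤ hammingDist starOrient₁ starOrient₂ := by decide +kernel
  have hfin := key ℓ le_rfl
  rw [h0, hend] at hfin
  omega

end PaperFlip
end

section
/- Let p, q ∈ ℕ and let s_1,…,s_p and t_1,…,t_q be positive integers with ∑_{i=1}^p s_i = ∑_{j=1}^q t_j = N. Set n = p + q, u = (s_1,…,s_p,t_1,…,t_q) ∈ ℕⁿ, a = (s_1,…,s_p,0,…,0) ∈ ℕⁿ, b = (0,…,0,t_1,…,t_q) ∈ ℕⁿ, and P = {x ∈ ℝⁿ : 0 ≤ x_i ≤ u_i for all i, and ∑_{i=1}^n x_i = N}. Then the minimum length of a path from a to b on the skeleton of P equals p + q − m, where m is the maximum size of a same-sum partition of [p] and [q] with respect to the weights (s_i) and (t_j). -/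
namespace PaperBox

/-- Two distinct vertices (extreme points) `x, y` of `P` are adjacent on the skeleton of
`P` if the segment `conv{x, y}` is an extreme subset of `P`. -/
def SkeletonAdj {n : ℕ} (P : Set (Fin n → ℝ)) (x y : Fin n → ℝ) : Prop :=
  x ≠ y ∧ x ∈ P.extremePoints ℝ ∧ y ∈ P.extremePoints ℝ ∧ IsExtreme ℝ P (segment ℝ x y)

/-- A path of length `ℓ` from `a` to `b` on the skeleton of `P`: a sequence of vertices of
`P` starting at `a`, ending at `b`, with consecutive vertices adjacent on the skeleton. -/
def SkeletonPath {n : ℕ} (P : Set (Fin n → ℝ)) (a b : Fin n → ℝ) (ℓ : ℕ) : Prop :=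
  ∃ g : ℕ → Fin n → ℝ, g 0 = a ∧ g ℓ = b ∧ (∀ i ≤ ℓ, g i ∈ P.extremePoints ℝ) ∧
    ∀ i < ℓ, SkeletonAdj P (g i) (g (i + 1))

/-- A same-sum partition of `S` and `T` of size `m`: partitions of `S` and of `T` into
`m` nonempty parts (encoded by surjections onto `Fin m`) such that corresponding parts
have equal weight. -/
def SameSumPartition {S T : Type*} [Fintype S] [Fintype T]
    (s : S → ℕ) (t : T → ℕ) (m : ℕ) : Prop :=
  ∃ (σ : S → Fin m) (τ : T → Fin m), Function.Surjective σ ∧ Function.Surjective τ ∧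
    ∀ ℓ : Fin m,
      ∑ i ∈ Finset.univ.filter (fun i => σ i = ℓ), s i =
        ∑ j ∈ Finset.univ.filter (fun j => τ j = ℓ), t j

open Finset


variable {n : ℕ}

def Pset (u : Fin n → ℝ) (N : ℝ) : Set (Fin n → ℝ) :=
  {x | (∀ i, 0 ≤ x i ∧ x i ≤ u i) ∧ ∑ i, x i = N}

/-- perturbation in direction e_i - e_j -/
def ptb (x : Fin n → ℝ) (i j : Fin n) (ε : ℝ) : Fin n → ℝ :=
  fun k => if k = i then x i + ε else if k = j then x j - ε else x k

lemma sum_pair (i j : Fin n) (hij : i ≠ j) (x : Fin n → ℝ) :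
    ∑ k, x k = x i + x j + ∑ k ∈ (Finset.univ.erase i).erase j, x k := by
  have h1 : ∑ k ∈ Finset.univ.erase i, x k = x j + ∑ k ∈ (Finset.univ.erase i).erase j, x k := by
    rw [Finset.add_sum_erase]
    exact Finset.mem_erase.2 ⟨Ne.symm hij, Finset.mem_univ j⟩
  have h2 : ∑ k, x k = x i + ∑ k ∈ Finset.univ.erase i, x k := by
    rw [Finset.add_sum_erase]; exact Finset.mem_univ i
  rw [h2, h1]; ring

lemma ptb_sum (x : Fin n → ℝ) (i j : Fin n) (hij : i ≠ j) (ε : ℝ) :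
    ∑ k, ptb x i j ε k = ∑ k, x k := by
  rw [sum_pair i j hij (ptb x i j ε), sum_pair i j hij x]
  have h1 : ptb x i j ε i = x i + ε := by simp [ptb]
  have h2 : ptb x i j ε j = x j - ε := by simp [ptb, hij.symm]
  have h3 : ∑ k ∈ (Finset.univ.erase i).erase j, ptb x i j ε k
      = ∑ k ∈ (Finset.univ.erase i).erase j, x k := by
    apply Finset.sum_congr rfl
    intro k hk
    simp only [Finset.mem_erase] at hk
    simp [ptb, hk.2.1, hk.1]
  rw [h1, h2, h3]; ring

lemma ptb_mem {u : Fin n → ℝ} {N : ℝ} {x : Fin n → ℝ} (hx : x ∈ Pset u N)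
    (i j : Fin n) (hij : i ≠ j) (ε : ℝ)
    (h1 : 0 ≤ x i + ε) (h2 : x i + ε ≤ u i) (h3 : 0 ≤ x j - ε) (h4 : x j - ε ≤ u j) :
    ptb x i j ε ∈ Pset u N := by
  constructor
  · intro k
    by_cases hki : k = i
    · subst hki; simp only [ptb, if_pos rfl]; exact ⟨h1, h2⟩
    · by_cases hkj : k = j
      · subst hkj; simp only [ptb, if_neg hki, if_pos rfl]; exact ⟨h3, h4⟩
      · simp only [ptb, if_neg hki, if_neg hkj]; exact hx.1 k
  · rw [ptb_sum x i j hij ε]; exact hx.2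

lemma mid_openSegment (z1 z2 : Fin n → ℝ) (x : Fin n → ℝ)
    (h : ∀ k, z1 k + z2 k = 2 * x k) : x ∈ openSegment ℝ z1 z2 := by
  refine ⟨1/2, 1/2, by norm_num, by norm_num, by norm_num, ?_⟩
  funext k
  have := h k
  simp only [Pi.add_apply, Pi.smul_apply, smul_eq_mul]
  linarith

/-- An extreme point of `Pset` has at most one non-boundary coordinate. -/
lemma boundary_of_mem_extremePoints {u : Fin n → ℝ} {N : ℝ} {x : Fin n → ℝ}
    (hx : x ∈ (Pset u N).extremePoints ℝ) :
    ∀ k1 k2, (0 < x k1 ∧ x k1 < u k1) → (0 < x k2 ∧ x k2 < u k2) → k1 = k2 := by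
  intro k1 k2 h1 h2
  by_contra hne
  set ε : ℝ := min (min (x k1) (u k1 - x k1)) (min (x k2) (u k2 - x k2)) with hε
  have hεpos : 0 < ε := by
    apply lt_min <;> apply lt_min <;> linarith [h1.1, h1.2, h2.1, h2.2]
  have hε1 : ε ≤ x k1 := le_trans (min_le_left _ _) (min_le_left _ _)
  have hε2 : ε ≤ u k1 - x k1 := le_trans (min_le_left _ _) (min_le_right _ _)
  have hε3 : ε ≤ x k2 := le_trans (min_le_right _ _) (min_le_left _ _)
  have hε4 : ε ≤ u k2 - x k2 := le_trans (min_le_right _ _) (min_le_right _ _)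
  have hz1 : ptb x k1 k2 ε ∈ Pset u N := ptb_mem hx.1 k1 k2 hne ε
    (by linarith) (by linarith) (by linarith) (by linarith)
  have hz2 : ptb x k1 k2 (-ε) ∈ Pset u N := ptb_mem hx.1 k1 k2 hne (-ε)
    (by linarith) (by linarith) (by linarith) (by linarith)
  have hmid : x ∈ openSegment ℝ (ptb x k1 k2 ε) (ptb x k1 k2 (-ε)) := by
    apply mid_openSegment
    intro k
    by_cases hki : k = k1
    · subst hki; simp [ptb, hne]; ring
    · by_cases hkj : k = k2
      · subst hkj; simp [ptb, hki]; ring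
      · simp only [ptb, if_neg hki, if_neg hkj]; ring
  have := (hx.2 hz1 hz2 hmid)
  have h := congrFun this k1
  simp [ptb] at h
  linarith

/-- An adjacent pair on the skeleton differs in at most two coordinates. -/
lemma adj_two_diff {u : Fin n → ℝ} {N : ℝ} {x y : Fin n → ℝ}
    (hadj : SkeletonAdj (Pset u N) x y) :
    ∃ i j, i ≠ j ∧ ∀ k, k ≠ i → k ≠ j → x k = y k := by
  obtain ⟨hxy, hxe, hye, hext⟩ := hadj
  -- no three coordinates differ
  have key : ∀ k1 k2 k3, k1 ≠ k2 → k1 ≠ k3 → k2 ≠ k3 →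
      x k1 ≠ y k1 → x k2 ≠ y k2 → x k3 ≠ y k3 → False := by
    intro k1 k2 k3 h12 h13 h23 d1 d2 d3
    set z : Fin n → ℝ := fun k => (x k + y k) / 2 with hz
    have hzseg : z ∈ segment ℝ x y := by
      refine ⟨1/2, 1/2, by norm_num, by norm_num, by norm_num, ?_⟩
      funext k
      simp only [Pi.add_apply, Pi.smul_apply, smul_eq_mul, hz]
      ring
    have hzP : z ∈ Pset u N := hext.1 hzseg
    have hint : ∀ k, x k ≠ y k → 0 < z k ∧ z k < u k := by
      intro k hk
      obtain ⟨hx0, hxu⟩ := hxe.1.1 k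
      obtain ⟨hy0, hyu⟩ := hye.1.1 k
      constructor
      · rcases lt_or_ge 0 (x k) with h | h
        · simp only [hz]; linarith
        · have hx0' : (0:ℝ) = x k := le_antisymm h hx0 |>.symm
          have : 0 < y k := lt_of_le_of_ne hy0 (fun he => hk ((hx0'.symm).trans he))
          simp only [hz]; linarith
      · rcases lt_or_ge (x k) (u k) with h | h
        · simp only [hz]; linarith
        · have hxu' : x k = u k := le_antisymm hxu h
          have : y k < u k := lt_of_le_of_ne hyu (fun he => hk (hxu'.trans he.symm))
          simp only [hz]; linarith
    obtain ⟨hz1p, hz1u⟩ := hint k1 d1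
    obtain ⟨hz2p, hz2u⟩ := hint k2 d2
    set ε : ℝ := min (min (z k1) (u k1 - z k1)) (min (z k2) (u k2 - z k2)) with hε
    have hεpos : 0 < ε := by
      apply lt_min <;> apply lt_min <;> linarith
    have hε1 : ε ≤ z k1 := le_trans (min_le_left _ _) (min_le_left _ _)
    have hε2 : ε ≤ u k1 - z k1 := le_trans (min_le_left _ _) (min_le_right _ _)
    have hε3 : ε ≤ z k2 := le_trans (min_le_right _ _) (min_le_left _ _)
    have hε4 : ε ≤ u k2 - z k2 := le_trans (min_le_right _ _) (min_le_right _ _)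
    have hw1 : ptb z k1 k2 ε ∈ Pset u N := ptb_mem hzP k1 k2 h12 ε
      (by linarith) (by linarith) (by linarith) (by linarith)
    have hw2 : ptb z k1 k2 (-ε) ∈ Pset u N := ptb_mem hzP k1 k2 h12 (-ε)
      (by linarith) (by linarith) (by linarith) (by linarith)
    have hmid : z ∈ openSegment ℝ (ptb z k1 k2 ε) (ptb z k1 k2 (-ε)) := by
      apply mid_openSegment
      intro k
      by_cases hki : k = k1
      · subst hki; simp [ptb, h12]; ring
      · by_cases hkj : k = k2
        · subst hkj; simp [ptb, hki]; ring
        · simp only [ptb, if_neg hki, if_neg hkj]; ring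
    have hwseg := (hext.2 hw1 hw2 hzseg hmid)
    obtain ⟨c1, c2, hc1, hc2, hc12, hcomb⟩ := hwseg
    have hk3 : c1 * x k3 + c2 * y k3 = z k3 := by
      have := congrFun hcomb k3
      simpa [ptb, (Ne.symm h13 : k3 ≠ k1), (Ne.symm h23 : k3 ≠ k2)] using this
    have hc1half : c1 = 1/2 := by
      simp only [hz] at hk3
      have hy3 : c2 = 1 - c1 := by linarith
      rw [hy3] at hk3
      have : (c1 - 1/2) * (x k3 - y k3) = 0 := by ring_nf; ring_nf at hk3; linarith
      rcases mul_eq_zero.1 this with h | h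
      · linarith
      · exact absurd (by linarith) d3
    have hk1 : c1 * x k1 + c2 * y k1 = z k1 + ε := by
      have := congrFun hcomb k1
      simpa [ptb] using this
    have hc2half : c2 = 1/2 := by linarith
    rw [hc1half, hc2half] at hk1
    simp only [hz] at hk1
    linarith
  -- now extract the two coordinates
  have hne : ∃ i, x i ≠ y i := by
    by_contra h
    push_neg at h
    exact hxy (funext h)
  obtain ⟨i, hi⟩ := hne
  by_cases hj : ∃ j, j ≠ i ∧ x j ≠ y j
  · obtain ⟨j, hji, hjd⟩ := hj
    refine ⟨i, j, Ne.symm hji, ?_⟩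
    intro k hki hkj
    by_contra hk
    exact key i j k (Ne.symm hji) (Ne.symm hki) (Ne.symm hkj) hi hjd hk
  · push_neg at hj
    -- only coordinate i differs: contradiction with equal sums
    exfalso
    have hsum : ∑ k, x k = ∑ k, y k := by rw [hxe.1.2, hye.1.2]
    have : x i + ∑ k ∈ Finset.univ.erase i, x k = y i + ∑ k ∈ Finset.univ.erase i, y k := by
      rw [Finset.add_sum_erase _ _ (Finset.mem_univ i), Finset.add_sum_erase _ _ (Finset.mem_univ i)]
      exact hsum
    have he : ∑ k ∈ Finset.univ.erase i, x k = ∑ k ∈ Finset.univ.erase i, y k := by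
      apply Finset.sum_congr rfl
      intro k hk
      exact hj k (Finset.mem_erase.1 hk).1
    rw [he] at this
    exact hi (by linarith)

/-- If two states agree off `{i,j}` and have the same total sum, sums over a set
containing both or neither of `i, j` agree. -/
lemma sum_subset_invar {u : Fin n → ℝ} (i j : Fin n) (hij : i ≠ j) (x y : Fin n → ℝ)
    (hagree : ∀ k, k ≠ i → k ≠ j → x k = y k) (hsum : ∑ k, x k = ∑ k, y k)
    (K : Finset (Fin n)) (hK : i ∈ K ↔ j ∈ K) :
    ∑ k ∈ K, x k = ∑ k ∈ K, y k := by
  have hpair : x i + x j = y i + y j := by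
    have hx := sum_pair i j hij x
    have hy := sum_pair i j hij y
    have hrest : ∑ k ∈ (Finset.univ.erase i).erase j, x k
        = ∑ k ∈ (Finset.univ.erase i).erase j, y k := by
      apply Finset.sum_congr rfl
      intro k hk
      simp only [Finset.mem_erase] at hk
      exact hagree k hk.2.1 hk.1
    rw [hx, hy, hrest] at hsum
    linarith
  by_cases hiK : i ∈ K
  · have hjK : j ∈ K := hK.1 hiK
    have hx : ∑ k ∈ K, x k = x i + x j + ∑ k ∈ (K.erase i).erase j, x k := by
      rw [← Finset.add_sum_erase _ _ hiK, ← Finset.add_sum_erase _ _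
        (Finset.mem_erase.2 ⟨Ne.symm hij, hjK⟩)]; ring
    have hy : ∑ k ∈ K, y k = y i + y j + ∑ k ∈ (K.erase i).erase j, y k := by
      rw [← Finset.add_sum_erase _ _ hiK, ← Finset.add_sum_erase _ _
        (Finset.mem_erase.2 ⟨Ne.symm hij, hjK⟩)]; ring
    have hrest : ∑ k ∈ (K.erase i).erase j, x k = ∑ k ∈ (K.erase i).erase j, y k := by
      apply Finset.sum_congr rfl
      intro k hk
      simp only [Finset.mem_erase] at hk
      exact hagree k hk.2.1 hk.1
    rw [hx, hy, hrest, hpair]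
  · have hjK : j ∉ K := fun h => hiK (hK.2 h)
    apply Finset.sum_congr rfl
    intro k hk
    exact hagree k (fun h => hiK (h ▸ hk)) (fun h => hjK (h ▸ hk))

/-- A point of `P` with at most one non-boundary coordinate is an extreme point. -/
lemma mem_extremePoints_of_boundary {u : Fin n → ℝ} {N : ℝ} {x : Fin n → ℝ}
    (hx : x ∈ Pset u N)
    (h1 : ∀ k1 k2, (0 < x k1 ∧ x k1 < u k1) → (0 < x k2 ∧ x k2 < u k2) → k1 = k2) :
    x ∈ (Pset u N).extremePoints ℝ := by
  refine ⟨hx, ?_⟩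
  intro z1 hz1 z2 hz2 hseg
  obtain ⟨α, β, hα, hβ, hαβ, hcomb⟩ := hseg
  have key : ∀ (w1 w2 : Fin n → ℝ) (γ δ : ℝ), 0 < γ → 0 < δ → γ + δ = 1 →
      w1 ∈ Pset u N → w2 ∈ Pset u N → (∀ k, γ * w1 k + δ * w2 k = x k) → w1 = x := by
    intro w1 w2 γ δ hγ hδ hγδ hw1 hw2 hc
    have pin : ∀ k, (x k = 0 ∨ x k = u k) → w1 k = x k := by
      intro k hk
      have b1 := (hw1.1 k)
      have b2 := (hw2.1 k)
      have := hc k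
      rcases hk with h | h <;> nlinarith [b1.1, b1.2, b2.1, b2.2]
    funext k
    by_contra hk
    have hxk : 0 < x k ∧ x k < u k := by
      by_contra hxk
      apply hk
      apply pin
      rcases hx.1 k with ⟨hl, hr⟩
      rcases lt_or_eq_of_le hl with hl' | hl'
      · rcases lt_or_eq_of_le hr with hr' | hr'
        · exact absurd ⟨hl', hr'⟩ hxk
        · right; exact hr'
      · left; exact hl'.symm
    have hrest : ∀ k', k' ≠ k → w1 k' = x k' := by
      intro k' hk'
      apply pin
      by_contra hb
      push_neg at hb
      have : 0 < x k' ∧ x k' < u k' := by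
        rcases hx.1 k' with ⟨hl, hr⟩
        exact ⟨lt_of_le_of_ne hl (Ne.symm hb.1), lt_of_le_of_ne hr hb.2⟩
      exact hk' (h1 k' k this hxk)
    have hs1 : ∑ k', w1 k' = ∑ k', x k' := by rw [hw1.2, hx.2]
    have : w1 k + ∑ k' ∈ Finset.univ.erase k, w1 k'
        = x k + ∑ k' ∈ Finset.univ.erase k, x k' := by
      rw [Finset.add_sum_erase _ _ (Finset.mem_univ k),
        Finset.add_sum_erase _ _ (Finset.mem_univ k)]
      exact hs1
    have : w1 k = x k := by
      have he : ∑ k' ∈ Finset.univ.erase k, w1 k' = ∑ k' ∈ Finset.univ.erase k, x k' :=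
        Finset.sum_congr rfl fun k' hk' => hrest k' (Finset.mem_erase.1 hk').1
      linarith [he ▸ this]
    exact hk this
  exact key z1 z2 α β hα hβ hαβ hz1 hz2 (fun k => congrFun hcomb k)


/-- Moving mass `δ` from coordinate `i` to coordinate `j`. -/
def mv (x : Fin n → ℝ) (i j : Fin n) (δ : ℝ) : Fin n → ℝ :=
  fun k => if k = i then x i - δ else if k = j then x j + δ else x k

lemma mv_i (x : Fin n → ℝ) (i j : Fin n) (δ : ℝ) : mv x i j δ i = x i - δ := by simp [mv]

lemma mv_j (x : Fin n → ℝ) {i j : Fin n} (hij : i ≠ j) (δ : ℝ) : mv x i j δ j = x j + δ := by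
  simp [mv, hij.symm]

lemma mv_k (x : Fin n → ℝ) {i j k : Fin n} (h1 : k ≠ i) (h2 : k ≠ j) (δ : ℝ) :
    mv x i j δ k = x k := by simp [mv, h1, h2]

lemma mv_sum (x : Fin n → ℝ) (i j : Fin n) (hij : i ≠ j) (δ : ℝ) :
    ∑ k, mv x i j δ k = ∑ k, x k := by
  rw [sum_pair i j hij (mv x i j δ), sum_pair i j hij x]
  have h1 : mv x i j δ i = x i - δ := by simp [mv]
  have h2 : mv x i j δ j = x j + δ := by simp [mv, hij.symm]
  have h3 : ∑ k ∈ (Finset.univ.erase i).erase j, mv x i j δ k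
      = ∑ k ∈ (Finset.univ.erase i).erase j, x k := by
    apply Finset.sum_congr rfl
    intro k hk
    simp only [Finset.mem_erase] at hk
    simp [mv, hk.2.1, hk.1]
  rw [h1, h2, h3]; ring

lemma mem_extremePoints_of_boundary' {u : Fin n → ℝ} {N : ℝ} {x : Fin n → ℝ}
    (hx : x ∈ Pset u N) (i j : Fin n)
    (hbd : ∀ k, k ≠ i → k ≠ j → x k = 0 ∨ x k = u k)
    (hij : x i = 0 ∨ x i = u i ∨ x j = 0 ∨ x j = u j) :
    x ∈ (Pset u N).extremePoints ℝ := by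
  apply mem_extremePoints_of_boundary hx
  intro k1 k2 h1 h2
  have hpk : ∀ k, (0 < x k ∧ x k < u k) → (k = i ∨ k = j) := by
    intro k hk
    by_contra hcon
    push_neg at hcon
    rcases hbd k hcon.1 hcon.2 with h | h <;> (rw [h] at hk; linarith [hk.1, hk.2])
  have hnb : ∀ k, (0 < x k ∧ x k < u k) → ¬(x k = 0 ∨ x k = u k) := by
    rintro k hk (h | h) <;> (rw [h] at hk; linarith [hk.1, hk.2])
  have hcontra : ¬((0 < x i ∧ x i < u i) ∧ (0 < x j ∧ x j < u j)) := by
    rintro ⟨hi, hj⟩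
    rcases hij with h | h | h | h
    · exact hnb i hi (Or.inl h)
    · exact hnb i hi (Or.inr h)
    · exact hnb j hj (Or.inl h)
    · exact hnb j hj (Or.inr h)
  rcases hpk k1 h1 with e1 | e1 <;> rcases hpk k2 h2 with e2 | e2
  · rw [e1, e2]
  · exact absurd ⟨e1 ▸ h1, e2 ▸ h2⟩ hcontra
  · exact absurd ⟨e2 ▸ h2, e1 ▸ h1⟩ hcontra
  · rw [e1, e2]

/-- The fundamental move: adjacency of `x` and `mv x i j δ` on the skeleton. -/
lemma skeletonAdj_mv {u : Fin n → ℝ} {N : ℝ} {x : Fin n → ℝ} (hx : x ∈ Pset u N)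
    (i j : Fin n) (hij : i ≠ j) (δ : ℝ) (hδ : 0 < δ)
    (hxi : δ ≤ x i) (hxj : x j + δ ≤ u j)
    (hup : x i = u i ∨ x j = 0)
    (hlo : x i = δ ∨ x j + δ = u j)
    (hbd : ∀ k, k ≠ i → k ≠ j → x k = 0 ∨ x k = u k) :
    SkeletonAdj (Pset u N) x (mv x i j δ) := by
  have hyP : mv x i j δ ∈ Pset u N := by
    constructor
    · intro k
      have hbi := hx.1 i
      have hbj := hx.1 j
      have hbk := hx.1 k
      by_cases hki : k = i
      · rw [hki, mv_i]
        exact ⟨by linarith, by linarith [hbi.2]⟩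
      · by_cases hkj : k = j
        · rw [hkj, mv_j x hij]
          exact ⟨by linarith [hbj.1], by linarith⟩
        · rw [mv_k x hki hkj]; exact hbk
    · rw [mv_sum x i j hij δ]; exact hx.2
  have hmvi : mv x i j δ i = x i - δ := mv_i x i j δ
  have hmvj : mv x i j δ j = x j + δ := mv_j x hij δ
  have hmvk : ∀ k, k ≠ i → k ≠ j → mv x i j δ k = x k := fun k h1 h2 => mv_k x h1 h2 δ
  refine ⟨?_, ?_, ?_, ?_⟩
  · intro h
    have := congrFun h j
    rw [hmvj] at this
    linarith
  · exact mem_extremePoints_of_boundary' hx i j hbd (by tauto)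
  · apply mem_extremePoints_of_boundary' hyP i j
    · intro k h1 h2; rw [hmvk k h1 h2]; exact hbd k h1 h2
    · rcases hlo with h | h
      · left; rw [hmvi, h]; ring
      · right; right; right; rw [hmvj, h]
  · constructor
    · -- segment ⊆ P
      rintro w ⟨c1, c2, hc1, hc2, hc12, rfl⟩
      constructor
      · intro k
        have h1 := hx.1 k
        have h2 := hyP.1 k
        simp only [Pi.add_apply, Pi.smul_apply, smul_eq_mul]
        constructor <;> nlinarith [h1.1, h1.2, h2.1, h2.2]
      · have : ∀ k, (c1 • x + c2 • mv x i j δ) k = c1 * x k + c2 * mv x i j δ k := by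
          intro k; simp
        rw [Finset.sum_congr rfl fun k _ => this k, Finset.sum_add_distrib,
          ← Finset.mul_sum, ← Finset.mul_sum, hx.2, hyP.2]
        linear_combination N * hc12
    · intro z1 hz1 z2 hz2 w hw hwopen
      -- key claim : anything in P agreeing with x off {i,j} lies on the segment
      have key : ∀ z : Fin n → ℝ, z ∈ Pset u N → (∀ k, k ≠ i → k ≠ j → z k = x k) →
          z ∈ segment ℝ x (mv x i j δ) := by
        intro z hzP hzk
        have hzsum : z i + z j = x i + x j := by
          have h1 := sum_pair i j hij z
          have h2 := sum_pair i j hij x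
          have hrest : ∑ k ∈ (Finset.univ.erase i).erase j, z k
              = ∑ k ∈ (Finset.univ.erase i).erase j, x k := by
            apply Finset.sum_congr rfl
            intro k hk
            simp only [Finset.mem_erase] at hk
            exact hzk k hk.2.1 hk.1
          rw [hzP.2] at h1
          rw [hx.2] at h2
          rw [hrest] at h1
          linarith
        have hzi1 : z i ≤ x i := by
          rcases hup with h | h
          · rw [h]; exact (hzP.1 i).2
          · have := (hzP.1 j).1
            rw [h] at hzsum
            linarith
        have hzi2 : x i - δ ≤ z i := by
          rcases hlo with h | h
          · rw [h]; simpa using (hzP.1 i).1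
          · have := (hzP.1 j).2
            linarith
        refine ⟨1 - (x i - z i)/δ, (x i - z i)/δ, ?_, ?_, by ring, ?_⟩
        · have : (x i - z i)/δ ≤ 1 := by
            rw [div_le_one hδ]; linarith
          linarith
        · exact div_nonneg (by linarith) (le_of_lt hδ)
        · funext k
          by_cases hki : k = i
          · rw [hki]
            simp only [Pi.add_apply, Pi.smul_apply, smul_eq_mul, hmvi]
            field_simp
            ring
          · by_cases hkj : k = j
            · rw [hkj]
              simp only [Pi.add_apply, Pi.smul_apply, smul_eq_mul, hmvj]
              have hzj : z j = x i + x j - z i := by linarith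
              rw [hzj]
              field_simp
              ring
            · simp only [Pi.add_apply, Pi.smul_apply, smul_eq_mul, hmvk k hki hkj, hzk k hki hkj]
              ring
      -- pin coordinates off {i,j}
      obtain ⟨c1, c2, hc1, hc2, hc12, hcomb⟩ := hw
      obtain ⟨α, β, hα, hβ, hαβ, hwcomb⟩ := hwopen
      have hpin : ∀ k, k ≠ i → k ≠ j → z1 k = x k ∧ z2 k = x k := by
        intro k h1 h2
        have hwk : w k = x k := by
          rw [← hcomb]
          simp only [Pi.add_apply, Pi.smul_apply, smul_eq_mul, hmvk k h1 h2]
          linear_combination x k * hc12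
        have hzb1 := hz1.1 k
        have hzb2 := hz2.1 k
        have hcombk : α * z1 k + β * z2 k = x k := by
          rw [← hwk, ← hwcomb]; simp
        rcases hbd k h1 h2 with h | h <;> rw [h] at hcombk ⊢ <;>
          constructor <;> nlinarith [hzb1.1, hzb1.2, hzb2.1, hzb2.2]
      exact key z1 hz1 (fun k h1 h2 => (hpin k h1 h2).1)

lemma skeletonPath_zero {P : Set (Fin n → ℝ)} {x : Fin n → ℝ}
    (hx : x ∈ P.extremePoints ℝ) : SkeletonPath P x x 0 :=
  ⟨fun _ => x, rfl, rfl, fun _ _ => hx, fun i hi => absurd hi (Nat.not_lt_zero i)⟩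

lemma skeletonPath_cons {P : Set (Fin n → ℝ)} {x y z : Fin n → ℝ} {ℓ : ℕ}
    (hadj : SkeletonAdj P x y) (hp : SkeletonPath P y z ℓ) : SkeletonPath P x z (ℓ + 1) := by
  obtain ⟨g, hg0, hgl, hgm, hga⟩ := hp
  refine ⟨fun i => if i = 0 then x else g (i - 1), by simp, by simp [hgl], ?_, ?_⟩
  · intro i hi
    by_cases h : i = 0
    · simp [h]; exact hadj.2.1
    · simp only [if_neg h]
      exact hgm (i - 1) (by omega)
  · intro i hi
    by_cases h : i = 0
    · subst h
      simp only [if_pos rfl, if_neg (Nat.one_ne_zero)]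
      simpa [hg0] using hadj
    · simp only [if_neg h, if_neg (by omega : ¬ i + 1 = 0)]
      have : i - 1 + 1 = i + 1 - 1 := by omega
      rw [show i + 1 - 1 = i - 1 + 1 by omega]
      exact hga (i - 1) (by omega)

lemma skeletonPath_trans {P : Set (Fin n → ℝ)} {x y z : Fin n → ℝ} {ℓ1 ℓ2 : ℕ}
    (h1 : SkeletonPath P x y ℓ1) (h2 : SkeletonPath P y z ℓ2) :
    SkeletonPath P x z (ℓ1 + ℓ2) := by
  obtain ⟨g1, hg10, hg1l, hg1m, hg1a⟩ := h1
  obtain ⟨g2, hg20, hg2l, hg2m, hg2a⟩ := h2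
  refine ⟨fun i => if i < ℓ1 then g1 i else g2 (i - ℓ1), ?_, ?_, ?_, ?_⟩
  · by_cases h : 0 < ℓ1
    · simp [h, hg10]
    · have : ℓ1 = 0 := by omega
      subst this
      simp only [lt_irrefl, if_neg]
      rw [hg20, ← hg1l, hg10]
      simp
  · have : ¬ (ℓ1 + ℓ2 < ℓ1) := by omega
    simp only [if_neg this]
    rw [show ℓ1 + ℓ2 - ℓ1 = ℓ2 by omega, hg2l]
  · intro i hi
    by_cases h : i < ℓ1
    · simp only [if_pos h]; exact hg1m i (by omega)
    · simp only [if_neg h]; exact hg2m (i - ℓ1) (by omega)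
  · intro i hi
    by_cases h : i + 1 < ℓ1
    · simp only [if_pos h, if_pos (by omega : i < ℓ1)]
      exact hg1a i (by omega)
    · by_cases h' : i < ℓ1
      · have hieq : i + 1 = ℓ1 := by omega
        simp only [if_pos h', if_neg h]
        rw [show i + 1 - ℓ1 = 0 by omega, hg20, ← hg1l, ← hieq]
        exact hg1a i (by omega)
      · simp only [if_neg h, if_neg h']
        rw [show i + 1 - ℓ1 = i - ℓ1 + 1 by omega]
        exact hg2a (i - ℓ1) (by omega)

lemma boundary_of_not_partial {v w : ℝ} (h0 : 0 ≤ v) (hw : v ≤ w)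
    (h : ¬(0 < v ∧ v < w)) : v = 0 ∨ v = w := by
  by_cases h1 : 0 < v
  · right
    by_contra h2
    exact h ⟨h1, lt_of_le_of_ne hw h2⟩
  · left; linarith

/-- The block lemma: from a vertex state `x`, all of whose "unfinished" coordinates are
in `D`, we can reach the state with target values on `D` within `|D| - 1` moves. -/
lemma block_path {u : Fin n → ℝ} {N : ℝ} (hu : ∀ k, 0 < u k) :
    ∀ (B : ℕ) (D : Finset (Fin n)) (x tgt : Fin n → ℝ), D.card ≤ B →
    x ∈ Pset u N →
    (∀ k ∈ D, tgt k = 0 ∨ tgt k = u k) →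
    (∀ k ∈ D, x k ≠ tgt k) →
    (∀ k ∉ D, x k = 0 ∨ x k = u k) →
    (∀ k1 k2, (0 < x k1 ∧ x k1 < u k1) → (0 < x k2 ∧ x k2 < u k2) → k1 = k2) →
    (∑ k ∈ D, x k = ∑ k ∈ D, tgt k) →
    ∃ (ℓ : ℕ) (y : Fin n → ℝ), ℓ + 1 ≤ max D.card 1 ∧ SkeletonPath (Pset u N) x y ℓ ∧
      (∀ k ∈ D, y k = tgt k) ∧ (∀ k ∉ D, y k = x k) := by
  intro B
  induction B with
  | zero =>
    intro D x tgt hcard hx htgt hnd hbd hpart hbal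
    have hD : D = ∅ := Finset.card_eq_zero.1 (Nat.le_zero.1 hcard)
    subst hD
    exact ⟨0, x, by simp, skeletonPath_zero (mem_extremePoints_of_boundary hx hpart),
      fun k hk => absurd hk (Finset.notMem_empty k), fun _ _ => rfl⟩
  | succ B ih =>
    intro D x tgt hcard hx htgt hnd hbd hpart hbal
    classical
    rcases Finset.eq_empty_or_nonempty D with hD | hD
    · subst hD
      exact ⟨0, x, by simp, skeletonPath_zero (mem_extremePoints_of_boundary hx hpart),
        fun k hk => absurd hk (Finset.notMem_empty k), fun _ _ => rfl⟩
    set Ds : Finset (Fin n) := D.filter (fun k => tgt k = 0) with hDs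
    set Dt : Finset (Fin n) := D.filter (fun k => tgt k = u k) with hDt
    have hsrc : Ds.Nonempty := by
      rw [Finset.filter_nonempty_iff]
      by_contra hcon
      push_neg at hcon
      have hlt : ∀ k ∈ D, x k < tgt k := by
        intro k hk
        rcases htgt k hk with h | h
        · exact absurd h (hcon k hk)
        · rw [h]
          exact lt_of_le_of_ne (hx.1 k).2 (by rw [← h]; exact hnd k hk)
      exact absurd hbal (ne_of_lt (Finset.sum_lt_sum_of_nonempty hD hlt))
    have hsink : Dt.Nonempty := by
      rw [Finset.filter_nonempty_iff]
      by_contra hcon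
      push_neg at hcon
      have hlt : ∀ k ∈ D, tgt k < x k := by
        intro k hk
        rcases htgt k hk with h | h
        · rw [h]
          exact lt_of_le_of_ne (hx.1 k).1 (by rw [← h]; exact fun he => hnd k hk he.symm)
        · exact absurd h (hcon k hk)
      exact absurd hbal (ne_of_gt (Finset.sum_lt_sum_of_nonempty hD hlt))
    -- choose source i (preferring a partial one)
    have hisrc : ∃ i ∈ Ds, (∃ k ∈ Ds, 0 < x k ∧ x k < u k) → (0 < x i ∧ x i < u i) := by
      by_cases hps : ∃ k ∈ Ds, 0 < x k ∧ x k < u k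
      · obtain ⟨i, hi, hip⟩ := hps
        exact ⟨i, hi, fun _ => hip⟩
      · obtain ⟨i, hi⟩ := hsrc
        exact ⟨i, hi, fun h => absurd h hps⟩
    obtain ⟨i, hiDs, hipref⟩ := hisrc
    have hisnk : ∃ j ∈ Dt, (∃ k ∈ Dt, 0 < x k ∧ x k < u k) → (0 < x j ∧ x j < u j) := by
      by_cases hps : ∃ k ∈ Dt, 0 < x k ∧ x k < u k
      · obtain ⟨j, hj, hjp⟩ := hps
        exact ⟨j, hj, fun _ => hjp⟩
      · obtain ⟨j, hj⟩ := hsink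
        exact ⟨j, hj, fun h => absurd h hps⟩
    obtain ⟨j, hjDt, hjpref⟩ := hisnk
    have hiD : i ∈ D := (Finset.mem_filter.1 hiDs).1
    have hjD : j ∈ D := (Finset.mem_filter.1 hjDt).1
    have htgti : tgt i = 0 := (Finset.mem_filter.1 hiDs).2
    have htgtj : tgt j = u j := (Finset.mem_filter.1 hjDt).2
    have hij : i ≠ j := by
      intro h
      rw [h] at htgti
      rw [htgti] at htgtj
      exact absurd htgtj.symm (ne_of_gt (hu j))
    have hxipos : 0 < x i := lt_of_le_of_ne (hx.1 i).1 (fun h => hnd i hiD (by rw [← h, htgti]))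
    have hxjlt : x j < u j := lt_of_le_of_ne (hx.1 j).2 (fun h => hnd j hjD (h.trans htgtj.symm))
    -- only i or j can be partial
    have honly : ∀ k, (0 < x k ∧ x k < u k) → k = i ∨ k = j := by
      intro k hk
      by_cases hkD : k ∈ D
      · rcases htgt k hkD with h | h
        · left
          exact hpart k i hk (hipref ⟨k, Finset.mem_filter.2 ⟨hkD, h⟩, hk⟩)
        · right
          exact hpart k j hk (hjpref ⟨k, Finset.mem_filter.2 ⟨hkD, h⟩, hk⟩)
      · exfalso
        rcases hbd k hkD with h | h <;> rw [h] at hk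
        · exact lt_irrefl _ hk.1
        · exact lt_irrefl _ hk.2
    have hnotij : ¬((0 < x i ∧ x i < u i) ∧ (0 < x j ∧ x j < u j)) := by
      rintro ⟨h1, h2⟩
      exact hij (hpart i j h1 h2)
    have hup : x i = u i ∨ x j = 0 := by
      by_cases h1 : x i = u i
      · exact Or.inl h1
      · right
        have hip : 0 < x i ∧ x i < u i := ⟨hxipos, lt_of_le_of_ne (hx.1 i).2 h1⟩
        have : ¬(0 < x j ∧ x j < u j) := fun h2 => hnotij ⟨hip, h2⟩
        rcases boundary_of_not_partial (hx.1 j).1 (hx.1 j).2 this with h | h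
        · exact h
        · exact absurd h (ne_of_lt hxjlt)
    set δ : ℝ := min (x i) (u j - x j) with hδdef
    have hδ : 0 < δ := lt_min hxipos (by linarith)
    have hδi : δ ≤ x i := min_le_left _ _
    have hδj : x j + δ ≤ u j := by
      have := min_le_right (x i) (u j - x j)
      linarith
    have hlo : x i = δ ∨ x j + δ = u j := by
      rcases min_choice (x i) (u j - x j) with h | h
      · left; rw [hδdef, h]
      · right; rw [hδdef, h]; ring
    have hbdij : ∀ k, k ≠ i → k ≠ j → x k = 0 ∨ x k = u k := by
      intro k h1 h2
      apply boundary_of_not_partial (hx.1 k).1 (hx.1 k).2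
      intro hk
      rcases honly k hk with h | h
      · exact h1 h
      · exact h2 h
    have hadj : SkeletonAdj (Pset u N) x (mv x i j δ) :=
      skeletonAdj_mv hx i j hij δ hδ hδi hδj hup hlo hbdij
    set y1 : Fin n → ℝ := mv x i j δ with hy1
    have hy1P : y1 ∈ Pset u N := hadj.2.2.1.1
    set D2 : Finset (Fin n) := D.filter (fun k => y1 k ≠ tgt k) with hD2
    have hD2sub : D2 ⊆ D := Finset.filter_subset _ _
    have hdone : i ∉ D2 ∨ j ∉ D2 := by
      rcases hlo with h | h
      · left
        simp only [hD2, Finset.mem_filter, not_and, not_not]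
        intro _
        rw [hy1, mv_i, htgti, ← h]; ring
      · right
        simp only [hD2, Finset.mem_filter, not_and, not_not]
        intro _
        rw [hy1, mv_j x hij, htgtj, ← h]
    have hD2lt : D2.card < D.card := by
      apply Finset.card_lt_card
      rw [Finset.ssubset_iff_of_subset hD2sub]
      rcases hdone with h | h
      · exact ⟨i, hiD, h⟩
      · exact ⟨j, hjD, h⟩
    -- invariants for the recursive call
    have hy1bd : ∀ k ∉ D2, y1 k = 0 ∨ y1 k = u k := by
      intro k hk
      by_cases hkD : k ∈ D
      · have : ¬ y1 k ≠ tgt k := by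
          intro h
          exact hk (Finset.mem_filter.2 ⟨hkD, h⟩)
        push_neg at this
        rw [this]
        exact htgt k hkD
      · have hki : k ≠ i := fun h => hkD (h ▸ hiD)
        have hkj : k ≠ j := fun h => hkD (h ▸ hjD)
        rw [hy1, mv_k x hki hkj]
        exact hbd k hkD
    have hy1part : ∀ k1 k2, (0 < y1 k1 ∧ y1 k1 < u k1) → (0 < y1 k2 ∧ y1 k2 < u k2) → k1 = k2 := by
      have honly1 : ∀ k, (0 < y1 k ∧ y1 k < u k) → k = i ∨ k = j := by
        intro k hk
        by_contra hcon
        push_neg at hcon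
        rw [hy1, mv_k x hcon.1 hcon.2] at hk
        exact (fun h => by rcases honly k hk with h1 | h1; exacts [hcon.1 h1, hcon.2 h1]) hk
      have hnot1 : ¬((0 < y1 i ∧ y1 i < u i) ∧ (0 < y1 j ∧ y1 j < u j)) := by
        rintro ⟨h1, h2⟩
        rcases hlo with h | h
        · rw [hy1, mv_i, h] at h1
          linarith [h1.1]
        · rw [hy1, mv_j x hij, h] at h2
          linarith [h2.2]
      intro k1 k2 h1 h2
      rcases honly1 k1 h1 with e1 | e1 <;> rcases honly1 k2 h2 with e2 | e2
      · rw [e1, e2]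
      · exact absurd ⟨e1 ▸ h1, e2 ▸ h2⟩ hnot1
      · exact absurd ⟨e2 ▸ h2, e1 ▸ h1⟩ hnot1
      · rw [e1, e2]
    have hy1bal : ∑ k ∈ D2, y1 k = ∑ k ∈ D2, tgt k := by
      have hsumD : ∑ k ∈ D, y1 k = ∑ k ∈ D, x k := by
        apply sum_subset_invar (u := u) i j hij y1 x
        · intro k h1 h2; exact mv_k x h1 h2 δ
        · rw [hy1, mv_sum x i j hij δ]
        · exact ⟨fun _ => hjD, fun _ => hiD⟩
      have hsplit := Finset.sum_filter_add_sum_filter_not D (fun k => y1 k ≠ tgt k) y1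
      have hsplit2 := Finset.sum_filter_add_sum_filter_not D (fun k => y1 k ≠ tgt k) tgt
      have heqq : ∑ k ∈ D.filter (fun k => ¬ y1 k ≠ tgt k), y1 k
          = ∑ k ∈ D.filter (fun k => ¬ y1 k ≠ tgt k), tgt k := by
        apply Finset.sum_congr rfl
        intro k hk
        have := (Finset.mem_filter.1 hk).2
        push_neg at this
        exact this
      rw [hsumD, hbal] at hsplit
      rw [← hsplit2, ← heqq] at hsplit
      simpa [hD2] using hsplit
    have hy1nd : ∀ k ∈ D2, y1 k ≠ tgt k := fun k hk => (Finset.mem_filter.1 hk).2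
    have hy1tgt : ∀ k ∈ D2, tgt k = 0 ∨ tgt k = u k := fun k hk => htgt k (hD2sub hk)
    obtain ⟨ℓ2, y, hlen, hpath, hytgt, hyoff⟩ :=
      ih D2 y1 tgt (by omega) hy1P hy1tgt hy1nd hy1bd hy1part hy1bal
    have hcard2 : 2 ≤ D.card := by
      have : ({i, j} : Finset (Fin n)) ⊆ D := by
        intro k hk
        rcases Finset.mem_insert.1 hk with h | h
        · exact h ▸ hiD
        · exact (Finset.mem_singleton.1 h) ▸ hjD
      calc 2 = ({i, j} : Finset (Fin n)).card := by rw [Finset.card_insert_of_notMem (by simpa using hij), Finset.card_singleton]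
      _ ≤ D.card := Finset.card_le_card this
    refine ⟨ℓ2 + 1, y, ?_, skeletonPath_cons hadj hpath, ?_, ?_⟩
    · have hmax : max D2.card 1 ≤ D.card - 1 := max_le (by omega) (by omega)
      have : max D.card 1 = D.card := max_eq_left (by omega)
      omega
    · intro k hk
      by_cases hk2 : k ∈ D2
      · exact hytgt k hk2
      · rw [hyoff k hk2]
        have : ¬ y1 k ≠ tgt k := by
          intro h
          exact hk2 (Finset.mem_filter.2 ⟨hk, h⟩)
        push_neg at this
        exact this
    · intro k hk
      have hk2 : k ∉ D2 := fun h => hk (hD2sub h)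
      rw [hyoff k hk2, hy1, mv_k x (fun h => hk (by rw [h]; exact hiD)) (fun h => hk (by rw [h]; exact hjD))]

open Relation

variable {α : Type*}

lemma eqvGen_sup_pair (r : α → α → Prop) (p1 p2 : α) (a b : α) :
    Relation.EqvGen (fun a b => r a b ∨ (a = p1 ∧ b = p2) ∨ (a = p2 ∧ b = p1)) a b ↔
      Relation.EqvGen r a b ∨ (Relation.EqvGen r a p1 ∧ Relation.EqvGen r p2 b) ∨
        (Relation.EqvGen r a p2 ∧ Relation.EqvGen r p1 b) := by
  constructor
  · intro h
    induction h with
    | rel a b hab =>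
      rcases hab with h | ⟨h1, h2⟩ | ⟨h1, h2⟩
      · exact Or.inl (EqvGen.rel _ _ h)
      · subst h1; subst h2
        exact Or.inr (Or.inl ⟨EqvGen.refl _, EqvGen.refl _⟩)
      · subst h1; subst h2
        exact Or.inr (Or.inr ⟨EqvGen.refl _, EqvGen.refl _⟩)
    | refl a => exact Or.inl (EqvGen.refl _)
    | symm a b _ ih =>
      rcases ih with h | ⟨h1, h2⟩ | ⟨h1, h2⟩
      · exact Or.inl (EqvGen.symm _ _ h)
      · exact Or.inr (Or.inr ⟨EqvGen.symm _ _ h2, EqvGen.symm _ _ h1⟩)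
      · exact Or.inr (Or.inl ⟨EqvGen.symm _ _ h2, EqvGen.symm _ _ h1⟩)
    | trans a b c _ _ ih1 ih2 =>
      rcases ih1 with h | ⟨h1, h2⟩ | ⟨h1, h2⟩ <;> rcases ih2 with h' | ⟨h1', h2'⟩ | ⟨h1', h2'⟩
      · exact Or.inl (EqvGen.trans _ _ _ h h')
      · exact Or.inr (Or.inl ⟨EqvGen.trans _ _ _ h h1', h2'⟩)
      · exact Or.inr (Or.inr ⟨EqvGen.trans _ _ _ h h1', h2'⟩)
      · exact Or.inr (Or.inl ⟨h1, EqvGen.trans _ _ _ h2 h'⟩)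
      · exact Or.inr (Or.inl ⟨h1, h2'⟩)
      · exact Or.inl (EqvGen.trans _ _ _ h1 h2')
      · exact Or.inr (Or.inr ⟨h1, EqvGen.trans _ _ _ h2 h'⟩)
      · exact Or.inl (EqvGen.trans _ _ _ h1 h2')
      · exact Or.inr (Or.inr ⟨h1, h2'⟩)
  · intro h
    have hmono : ∀ {x y : α}, Relation.EqvGen r x y →
        Relation.EqvGen (fun a b => r a b ∨ (a = p1 ∧ b = p2) ∨ (a = p2 ∧ b = p1)) x y :=
      fun h => EqvGen.mono (fun a b hr => Or.inl hr) _ _ h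
    have hp : Relation.EqvGen (fun a b => r a b ∨ (a = p1 ∧ b = p2) ∨ (a = p2 ∧ b = p1)) p1 p2 :=
      EqvGen.rel _ _ (Or.inr (Or.inl ⟨rfl, rfl⟩))
    rcases h with h | ⟨h1, h2⟩ | ⟨h1, h2⟩
    · exact hmono h
    · exact EqvGen.trans _ _ _ (EqvGen.trans _ _ _ (hmono h1) hp) (hmono h2)
    · exact EqvGen.trans _ _ _ (EqvGen.trans _ _ _ (hmono h1) (EqvGen.symm _ _ hp)) (hmono h2)

lemma quot_card_bot [Finite α] :
    Nat.card (Quotient (Relation.EqvGen.setoid (fun _ _ : α => False))) = Nat.card α := by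
  symm
  apply Nat.card_eq_of_bijective (Quotient.mk (Relation.EqvGen.setoid (fun _ _ : α => False)))
  constructor
  · intro a b hab
    have hgen : Relation.EqvGen (fun _ _ : α => False) a b := Quotient.exact hab
    clear hab
    induction hgen with
    | rel x y hxy => exact hxy.elim
    | refl x => rfl
    | symm x y _ ih => exact ih.symm
    | trans x y z _ _ ih1 ih2 => exact ih1.trans ih2
  · exact Quotient.mk_surjective

lemma quot_card_step [Finite α] (r r' : α → α → Prop) (p1 p2 : α)
    (hiff : ∀ a b, r' a b ↔ (r a b ∨ (a = p1 ∧ b = p2) ∨ (a = p2 ∧ b = p1))) :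
    Nat.card (Quotient (Relation.EqvGen.setoid r)) ≤
      Nat.card (Quotient (Relation.EqvGen.setoid r')) + 1 := by
  classical
  have hr' : r' = (fun a b => r a b ∨ (a = p1 ∧ b = p2) ∨ (a = p2 ∧ b = p1)) := by
    funext a b
    exact propext (hiff a b)
  subst hr'
  set s := Relation.EqvGen.setoid r with hs
  set s' := Relation.EqvGen.setoid
    (fun a b => r a b ∨ (a = p1 ∧ b = p2) ∨ (a = p2 ∧ b = p1)) with hs'
  set φ : Quotient s → Quotient s' :=
    Quotient.map' id (fun a b h => Relation.EqvGen.mono (fun a b hr => Or.inl hr) _ _ h) with hφ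
  have hφmk : ∀ a : α, φ (Quotient.mk s a) = Quotient.mk s' a := fun a => rfl
  set F : Quotient s → (Quotient s') ⊕ Unit :=
    fun c => if c = Quotient.mk s p1 then Sum.inr () else Sum.inl (φ c) with hF
  have hinj : Function.Injective F := by
    intro c d hcd
    by_cases hc : c = Quotient.mk s p1 <;> by_cases hd : d = Quotient.mk s p1
    · rw [hc, hd]
    · simp only [hF, if_pos hc, if_neg hd] at hcd
      exact absurd hcd (by simp)
    · simp only [hF, if_neg hc, if_pos hd] at hcd
      exact absurd hcd (by simp)
    · simp only [hF, if_neg hc, if_neg hd, Sum.inl.injEq] at hcd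
      obtain ⟨a, rfl⟩ := Quotient.exists_rep c
      obtain ⟨b, rfl⟩ := Quotient.exists_rep d
      rw [hφmk, hφmk] at hcd
      have hab : Relation.EqvGen (fun a b => r a b ∨ (a = p1 ∧ b = p2) ∨ (a = p2 ∧ b = p1)) a b :=
        Quotient.exact hcd
      rcases (eqvGen_sup_pair r p1 p2 a b).1 hab with h | ⟨h1, h2⟩ | ⟨h1, h2⟩
      · exact Quotient.sound h
      · exact absurd (Quotient.sound h1) hc
      · exact absurd (Quotient.sound (Relation.EqvGen.symm _ _ h2)) hd
  calc Nat.card (Quotient s) ≤ Nat.card ((Quotient s') ⊕ Unit) :=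
        Nat.card_le_card_of_injective F hinj
    _ = Nat.card (Quotient s') + 1 := by simp [Nat.card_sum]

lemma card_quot_edges [Finite α] (e : ℕ → α × α) (m : ℕ) :
    Nat.card α ≤ Nat.card (Quotient (Relation.EqvGen.setoid
      (fun a b => ∃ i < m, (a, b) = e i ∨ (b, a) = e i))) + m := by
  induction m with
  | zero =>
    have h0 : (fun a b : α => ∃ i < 0, (a, b) = e i ∨ (b, a) = e i) = (fun _ _ => False) := by
      funext a b
      simp
    rw [h0, quot_card_bot]
    omega
  | succ m ih =>
    have hstep := quot_card_step (fun a b : α => ∃ i < m, (a, b) = e i ∨ (b, a) = e i)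
      (fun a b : α => ∃ i < m + 1, (a, b) = e i ∨ (b, a) = e i) (e m).1 (e m).2 ?_
    · omega
    · intro a b
      constructor
      · rintro ⟨i, hi, h⟩
        by_cases him : i < m
        · exact Or.inl ⟨i, him, h⟩
        · have : i = m := by omega
          subst this
          rcases h with h | h
          · exact Or.inr (Or.inl ⟨by rw [← h], by rw [← h]⟩)
          · exact Or.inr (Or.inr ⟨by rw [← h], by rw [← h]⟩)
      · rintro (⟨i, hi, h⟩ | ⟨h1, h2⟩ | ⟨h1, h2⟩)
        · exact ⟨i, by omega, h⟩
        · exact ⟨m, by omega, Or.inl (by rw [h1, h2])⟩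
        · exact ⟨m, by omega, Or.inr (by rw [h1, h2])⟩


section Assembly

variable {p q : ℕ}

def uvec (s : Fin p → ℕ) (t : Fin q → ℕ) : Fin (p + q) → ℝ :=
  Fin.addCases (fun i => (s i : ℝ)) (fun j => (t j : ℝ))

def avec (s : Fin p → ℕ) (q : ℕ) : Fin (p + q) → ℝ :=
  Fin.addCases (fun i => (s i : ℝ)) (fun _ => 0)

def bvec (p : ℕ) (t : Fin q → ℕ) : Fin (p + q) → ℝ :=
  Fin.addCases (fun _ => 0) (fun j => (t j : ℝ))

lemma addCases_cases (k : Fin (p + q)) :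
    (∃ i, k = Fin.castAdd q i) ∨ (∃ j, k = Fin.natAdd p j) :=
  Fin.addCases (fun i => Or.inl ⟨i, rfl⟩) (fun j => Or.inr ⟨j, rfl⟩) k

lemma filter_sum_split (f : Fin p → ℝ) (g : Fin q → ℝ) (φ : Fin (p + q) → Prop)
    [DecidablePred φ] :
    ∑ k ∈ Finset.univ.filter φ, Fin.addCases (motive := fun _ => ℝ) f g k
      = ∑ i ∈ Finset.univ.filter (fun i => φ (Fin.castAdd q i)), f i
        + ∑ j ∈ Finset.univ.filter (fun j => φ (Fin.natAdd p j)), g j := by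
  rw [Finset.sum_filter, Finset.sum_filter, Finset.sum_filter, Fin.sum_univ_add]
  congr 1
  · exact Finset.sum_congr rfl fun i _ => by simp
  · exact Finset.sum_congr rfl fun j _ => by simp

variable {s : Fin p → ℕ} {t : Fin q → ℕ} {N : ℕ}

lemma uvec_pos (hs : ∀ i, 0 < s i) (ht : ∀ j, 0 < t j) : ∀ k, 0 < uvec s t k := by
  intro k
  rcases addCases_cases k with ⟨i, rfl⟩ | ⟨j, rfl⟩
  · simp only [uvec, Fin.addCases_left]
    exact_mod_cast hs i
  · simp only [uvec, Fin.addCases_right]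
    exact_mod_cast ht j

lemma avec_bd : ∀ k, avec s q k = 0 ∨ avec s q k = uvec s t k := by
  intro k
  rcases addCases_cases k with ⟨i, rfl⟩ | ⟨j, rfl⟩
  · right; simp [avec, uvec]
  · left; simp [avec]

lemma bvec_bd : ∀ k, bvec p t k = 0 ∨ bvec p t k = uvec s t k := by
  intro k
  rcases addCases_cases k with ⟨i, rfl⟩ | ⟨j, rfl⟩
  · left; simp [bvec]
  · right; simp [bvec, uvec]

lemma avec_mem (hsN : ∑ i, s i = N) : avec s q ∈ Pset (uvec s t) (N : ℝ) := by
  constructor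
  · intro k
    rcases addCases_cases k with ⟨i, rfl⟩ | ⟨j, rfl⟩
    · simp only [avec, uvec, Fin.addCases_left]
      exact ⟨by positivity, le_refl _⟩
    · simp only [avec, uvec, Fin.addCases_right]
      exact ⟨le_refl _, by positivity⟩
  · rw [Fin.sum_univ_add (f := fun k => avec s q k)]
    simp only [avec, Fin.addCases_left, Fin.addCases_right]
    rw [Finset.sum_const_zero, add_zero, ← Nat.cast_sum, hsN]

lemma bvec_mem (htN : ∑ j, t j = N) : bvec p t ∈ Pset (uvec s t) (N : ℝ) := by
  constructor
  · intro k
    rcases addCases_cases k with ⟨i, rfl⟩ | ⟨j, rfl⟩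
    · simp only [bvec, uvec, Fin.addCases_left]
      exact ⟨le_refl _, by positivity⟩
    · simp only [bvec, uvec, Fin.addCases_right]
      exact ⟨by positivity, le_refl _⟩
  · rw [Fin.sum_univ_add (f := fun k => bvec p t k)]
    simp only [bvec, Fin.addCases_left, Fin.addCases_right]
    rw [Finset.sum_const_zero, zero_add, ← Nat.cast_sum, htN]

/-- Upper bound: given a same-sum partition of size `M`, there is a skeleton path of
length at most `p + q - M`. -/
lemma upper_path (hs : ∀ i, 0 < s i) (ht : ∀ j, 0 < t j)
    (hsN : ∑ i, s i = N) (htN : ∑ j, t j = N)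
    (M : ℕ) (σ : Fin p → Fin M) (τ : Fin q → Fin M)
    (hσ : Function.Surjective σ) (hτ : Function.Surjective τ)
    (hsum : ∀ r : Fin M, ∑ i ∈ Finset.univ.filter (fun i => σ i = r), s i
      = ∑ j ∈ Finset.univ.filter (fun j => τ j = r), t j) :
    ∃ L, L + M ≤ p + q ∧
      SkeletonPath (Pset (uvec s t) (N : ℝ)) (avec s q) (bvec p t) L := by
  classical
  have hu := uvec_pos hs ht
  set κ : Fin (p + q) → Fin M := Fin.addCases (motive := fun _ => Fin M) σ τ with hκ
  set X : ℕ → Fin (p + q) → ℝ := fun r k => if (κ k : ℕ) < r then bvec p t k else avec s q k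
    with hX
  have hX0 : X 0 = avec s q := by
    funext k; simp [hX]
  have hXM : X M = bvec p t := by
    funext k; simp [hX, (κ k).isLt]
  have hX01 : ∀ r k, X r k = 0 ∨ X r k = uvec s t k := by
    intro r k
    by_cases h : (κ k : ℕ) < r
    · simp only [hX, if_pos h]
      exact bvec_bd k
    · simp only [hX, if_neg h]
      exact avec_bd k
  have hXpart : ∀ r, ∀ k1 k2, (0 < X r k1 ∧ X r k1 < uvec s t k1) →
      (0 < X r k2 ∧ X r k2 < uvec s t k2) → k1 = k2 := by
    intro r k1 k2 h1 _
    exfalso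
    rcases hX01 r k1 with h | h <;> rw [h] at h1 <;> linarith [h1.1, h1.2]
  have hab_ne : ∀ k, avec s q k ≠ bvec p t k := by
    intro k
    rcases addCases_cases k with ⟨i, rfl⟩ | ⟨j, rfl⟩
    · simp only [avec, bvec, Fin.addCases_left]
      exact_mod_cast (hs i).ne'
    · simp only [avec, bvec, Fin.addCases_right]
      exact_mod_cast (ht j).ne
  -- the chain over blocks
  have hchain : ∀ r ≤ M, ∃ L,
      L + r ≤ ∑ r' ∈ Finset.range r, (Finset.univ.filter (fun k => (κ k : ℕ) = r')).card ∧
      SkeletonPath (Pset (uvec s t) (N : ℝ)) (X 0) (X r) L := by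
    intro r
    induction r with
    | zero =>
      intro _
      refine ⟨0, by simp, skeletonPath_zero ?_⟩
      apply mem_extremePoints_of_boundary (hX0 ▸ avec_mem hsN) (hXpart 0)
    | succ r ih =>
      intro hr1
      have hrM : r < M := hr1
      obtain ⟨L0, hL0, hpath0⟩ := ih (le_of_lt hrM)
      have hXr : X r ∈ Pset (uvec s t) (N : ℝ) := by
        obtain ⟨g, hg0, hgl, hgm, _⟩ := hpath0
        have := hgm L0 le_rfl
        rw [hgl] at this
        exact this.1
      set D : Finset (Fin (p + q)) := Finset.univ.filter (fun k => (κ k : ℕ) = r) with hD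
      have hXrD : ∀ k ∈ D, X r k = avec s q k := by
        intro k hk
        have : (κ k : ℕ) = r := (Finset.mem_filter.1 hk).2
        simp [hX, this]
      have hbal : ∑ k ∈ D, X r k = ∑ k ∈ D, bvec p t k := by
        rw [Finset.sum_congr rfl hXrD]
        have hA : ∑ k ∈ D, avec s q k
            = ((∑ i ∈ Finset.univ.filter (fun i => σ i = ⟨r, hrM⟩), s i : ℕ) : ℝ) := by
          rw [hD]
          unfold avec
          rw [filter_sum_split (fun i => (s i : ℝ)) (fun _ => 0)]
          rw [Finset.sum_const_zero, add_zero, Nat.cast_sum]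
          apply Finset.sum_congr
          · apply Finset.filter_congr
            intro i _
            simp [hκ, Fin.ext_iff]
          · intro i _; rfl
        have hB : ∑ k ∈ D, bvec p t k
            = ((∑ j ∈ Finset.univ.filter (fun j => τ j = ⟨r, hrM⟩), t j : ℕ) : ℝ) := by
          rw [hD]
          unfold bvec
          rw [filter_sum_split (fun _ => (0:ℝ)) (fun j => (t j : ℝ))]
          rw [Finset.sum_const_zero, zero_add, Nat.cast_sum]
          apply Finset.sum_congr
          · apply Finset.filter_congr
            intro j _
            simp [hκ, Fin.ext_iff]
          · intro j _; rfl
        rw [hA, hB, hsum ⟨r, hrM⟩]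
      obtain ⟨ℓb, y, hℓb, hpathb, hytgt, hyoff⟩ :=
        block_path hu D.card D (X r) (bvec p t) le_rfl hXr
          (fun k _ => bvec_bd k)
          (by
            intro k hk
            rw [hXrD k hk]
            exact hab_ne k)
          (fun k _ => hX01 r k)
          (hXpart r) hbal
      have hyX : y = X (r + 1) := by
        funext k
        by_cases hk : (κ k : ℕ) = r
        · have hkD : k ∈ D := Finset.mem_filter.2 ⟨Finset.mem_univ k, hk⟩
          rw [hytgt k hkD]
          simp [hX, hk]
        · have hkD : k ∉ D := fun h => hk (Finset.mem_filter.1 h).2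
          rw [hyoff k hkD]
          have : ((κ k : ℕ) < r + 1) ↔ ((κ k : ℕ) < r) := by omega
          simp only [hX, this]
      have hDne : D.Nonempty := by
        obtain ⟨i, hi⟩ := hσ ⟨r, hrM⟩
        refine ⟨Fin.castAdd q i, Finset.mem_filter.2 ⟨Finset.mem_univ _, ?_⟩⟩
        simp [hκ, hi]
      have hDcard : 1 ≤ D.card := Finset.card_pos.2 hDne
      refine ⟨L0 + ℓb, ?_, skeletonPath_trans hpath0 (hyX ▸ hpathb)⟩
      rw [Finset.sum_range_succ]
      have hmax : max D.card 1 = D.card := max_eq_left hDcard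
      rw [hmax] at hℓb
      rw [← hD]
      omega
  obtain ⟨L, hL, hpath⟩ := hchain M le_rfl
  have hfib : ∑ r' ∈ Finset.range M, (Finset.univ.filter (fun k => (κ k : ℕ) = r')).card
      = p + q := by
    rw [← Finset.card_eq_sum_card_fiberwise (f := fun k => (κ k : ℕ))
      (t := Finset.range M) (fun k _ => Finset.mem_range.2 (κ k).isLt)]
    simp
  rw [hfib] at hL
  rw [hX0, hXM] at hpath
  exact ⟨L, hL, hpath⟩

/-- Lower bound: any skeleton path from `a` to `b` of length `ℓ` yields a same-sum
partition of size `c` with `p + q ≤ c + ℓ`. -/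
lemma lower_bound (hs : ∀ i, 0 < s i) (ht : ∀ j, 0 < t j) (hpq : 0 < p + q)
    {ℓ : ℕ} (hpath : SkeletonPath (Pset (uvec s t) (N : ℝ)) (avec s q) (bvec p t) ℓ) :
    ∃ c, SameSumPartition s t c ∧ p + q ≤ c + ℓ := by
  classical
  obtain ⟨g, hg0, hgl, hgm, hga⟩ := hpath
  have hgP : ∀ i ≤ ℓ, g i ∈ Pset (uvec s t) (N : ℝ) := fun i hi => (hgm i hi).1
  have hpair : ∀ i, i < ℓ → ∃ pr : Fin (p + q) × Fin (p + q), pr.1 ≠ pr.2 ∧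
      ∀ k, k ≠ pr.1 → k ≠ pr.2 → g i k = g (i + 1) k := by
    intro i hi
    obtain ⟨a, b, hab, hk⟩ := adj_two_diff (hga i hi)
    exact ⟨(a, b), hab, hk⟩
  set d : Fin (p + q) := ⟨0, hpq⟩ with hd
  set e : ℕ → Fin (p + q) × Fin (p + q) :=
    fun i => if h : i < ℓ then (hpair i h).choose else (d, d) with he
  set sd := Relation.EqvGen.setoid
    (fun a b : Fin (p + q) => ∃ i < ℓ, (a, b) = e i ∨ (b, a) = e i) with hsd
  have hcount : p + q ≤ Nat.card (Quotient sd) + ℓ := by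
    have := card_quot_edges e ℓ
    simpa using this
  set c := Nat.card (Quotient sd) with hc
  set E : Quotient sd ≃ Fin c := Finite.equivFin _ with hE
  set K : Quotient sd → Finset (Fin (p + q)) :=
    fun cq => Finset.univ.filter (fun k => Quotient.mk sd k = cq) with hK
  -- class weights are invariant along the path
  have hinv : ∀ cq, ∑ k ∈ K cq, g 0 k = ∑ k ∈ K cq, g ℓ k := by
    intro cq
    have hstep : ∀ i ≤ ℓ, ∑ k ∈ K cq, g i k = ∑ k ∈ K cq, g 0 k := by
      intro i
      induction i with
      | zero => intro _; rfl
      | succ i ih =>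
        intro hi1
        have hi : i < ℓ := hi1
        rw [← ih (le_of_lt hi)]
        obtain ⟨hne, hagree⟩ := (hpair i hi).choose_spec
        have hei : e i = (hpair i hi).choose := by
          rw [he]; simp [hi]
        have hrel12 : Quotient.mk sd ((hpair i hi).choose.1)
            = Quotient.mk sd ((hpair i hi).choose.2) := by
          apply Quotient.sound
          exact Relation.EqvGen.rel _ _ ⟨i, hi, Or.inl (by rw [hei])⟩
        symm
        apply sum_subset_invar (u := uvec s t) _ _ hne (g i) (g (i + 1)) hagree
        · rw [(hgP i (le_of_lt hi)).2, (hgP (i + 1) hi1).2]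
        · constructor
          · intro hm
            rw [hK, Finset.mem_filter] at hm ⊢
            exact ⟨Finset.mem_univ _, by rw [← hrel12]; exact hm.2⟩
          · intro hm
            rw [hK, Finset.mem_filter] at hm ⊢
            exact ⟨Finset.mem_univ _, by rw [hrel12]; exact hm.2⟩
    exact (hstep ℓ le_rfl).symm
  set σ' : Fin p → Fin c := fun i => E (Quotient.mk sd (Fin.castAdd q i)) with hσ'
  set τ' : Fin q → Fin c := fun j => E (Quotient.mk sd (Fin.natAdd p j)) with hτ'
  -- class weights at the endpoints
  have hWA : ∀ l : Fin c, ∑ k ∈ K (E.symm l), avec s q k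
      = ((∑ i ∈ Finset.univ.filter (fun i => σ' i = l), s i : ℕ) : ℝ) := by
    intro l
    rw [hK]
    unfold avec
    rw [filter_sum_split (fun i => (s i : ℝ)) (fun _ => 0)]
    rw [Finset.sum_const_zero, add_zero, Nat.cast_sum]
    apply Finset.sum_congr
    · apply Finset.filter_congr
      intro i _
      rw [Equiv.eq_symm_apply]
    · intro i _; rfl
  have hWB : ∀ l : Fin c, ∑ k ∈ K (E.symm l), bvec p t k
      = ((∑ j ∈ Finset.univ.filter (fun j => τ' j = l), t j : ℕ) : ℝ) := by
    intro l
    rw [hK]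
    unfold bvec
    rw [filter_sum_split (fun _ => (0:ℝ)) (fun j => (t j : ℝ))]
    rw [Finset.sum_const_zero, zero_add, Nat.cast_sum]
    apply Finset.sum_congr
    · apply Finset.filter_congr
      intro j _
      rw [Equiv.eq_symm_apply]
    · intro j _; rfl
  have hWeq : ∀ l : Fin c,
      ((∑ i ∈ Finset.univ.filter (fun i => σ' i = l), s i : ℕ) : ℝ)
        = ((∑ j ∈ Finset.univ.filter (fun j => τ' j = l), t j : ℕ) : ℝ) := by
    intro l
    rw [← hWA, ← hWB, ← hg0, ← hgl]
    exact hinv (E.symm l)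
  have hsums : ∀ l : Fin c,
      ∑ i ∈ Finset.univ.filter (fun i => σ' i = l), s i
        = ∑ j ∈ Finset.univ.filter (fun j => τ' j = l), t j := by
    intro l
    exact_mod_cast hWeq l
  -- surjectivity
  have hσsurj : Function.Surjective σ' := by
    intro l
    obtain ⟨k, hk⟩ := Quotient.exists_rep (E.symm l)
    rcases addCases_cases k with ⟨i, rfl⟩ | ⟨j, rfl⟩
    · refine ⟨i, ?_⟩
      show E (Quotient.mk sd (Fin.castAdd q i)) = l
      rw [hk]
      exact Equiv.apply_symm_apply E l
    · by_contra hcon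
      push_neg at hcon
      have hempty : Finset.univ.filter (fun i => σ' i = l) = ∅ :=
        Finset.filter_eq_empty_iff.2 (fun i _ => hcon i)
      have hzero : ((∑ i ∈ Finset.univ.filter (fun i => σ' i = l), s i : ℕ) : ℝ) = 0 := by
        rw [hempty]; simp
      have hmem : Fin.natAdd p j ∈ K (E.symm l) :=
        Finset.mem_filter.2 ⟨Finset.mem_univ _, hk⟩
      have hge : (t j : ℝ) ≤ ∑ k ∈ K (E.symm l), bvec p t k := by
        have hle := Finset.single_le_sum (f := fun k => bvec p t k)
          (fun k _ => by
            show 0 ≤ bvec p t k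
            rcases bvec_bd (s := s) k with h | h
            · exact le_of_eq h.symm
            · rw [h]; exact le_of_lt (uvec_pos hs ht k)) hmem
        have hbj : bvec p t (Fin.natAdd p j) = (t j : ℝ) := by simp [bvec]
        exact le_trans hbj.ge hle
      rw [hWB l, ← hWeq l, hzero] at hge
      have : (0:ℝ) < (t j : ℝ) := by exact_mod_cast ht j
      linarith
  have hτsurj : Function.Surjective τ' := by
    intro l
    obtain ⟨k, hk⟩ := Quotient.exists_rep (E.symm l)
    rcases addCases_cases k with ⟨i, rfl⟩ | ⟨j, rfl⟩
    · by_contra hcon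
      push_neg at hcon
      have hempty : Finset.univ.filter (fun j => τ' j = l) = ∅ :=
        Finset.filter_eq_empty_iff.2 (fun j _ => hcon j)
      have hzero : ((∑ j ∈ Finset.univ.filter (fun j => τ' j = l), t j : ℕ) : ℝ) = 0 := by
        rw [hempty]; simp
      have hmem : Fin.castAdd q i ∈ K (E.symm l) :=
        Finset.mem_filter.2 ⟨Finset.mem_univ _, hk⟩
      have hge : (s i : ℝ) ≤ ∑ k ∈ K (E.symm l), avec s q k := by
        have hle := Finset.single_le_sum (f := fun k => avec s q k)
          (fun k _ => by
            show 0 ≤ avec s q k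
            rcases avec_bd (t := t) k with h | h
            · exact le_of_eq h.symm
            · rw [h]; exact le_of_lt (uvec_pos hs ht k)) hmem
        have hai : avec s q (Fin.castAdd q i) = (s i : ℝ) := by simp [avec]
        exact le_trans hai.ge hle
      rw [hWA l, hWeq l, hzero] at hge
      have : (0:ℝ) < (s i : ℝ) := by exact_mod_cast hs i
      linarith
    · refine ⟨j, ?_⟩
      show E (Quotient.mk sd (Fin.natAdd p j)) = l
      rw [hk]
      exact Equiv.apply_symm_apply E l
  exact ⟨c, ⟨σ', τ', hσsurj, hτsurj, hsums⟩, hcount⟩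


/-- With `n = p + q`, `u = (s₁,…,s_p,t₁,…,t_q)`,
`a = (s₁,…,s_p,0,…,0)`, `b = (0,…,0,t₁,…,t_q)` and
`P = {x ∈ ℝⁿ : 0 ≤ xᵢ ≤ uᵢ, ∑ xᵢ = N}`, the minimum length of a path from `a` to `b` on
the skeleton of `P` equals `p + q - m`, where `m` is the maximum size of a same-sum
partition of `[p]` and `[q]` with respect to the weights `(sᵢ)` and `(tⱼ)`. -/
theorem min_skeleton_path_eq_sub_max_partition (p q : ℕ)
    (s : Fin p → ℕ) (t : Fin q → ℕ) (N : ℕ)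
    (hs : ∀ i, 0 < s i) (ht : ∀ j, 0 < t j)
    (hsN : ∑ i, s i = N) (htN : ∑ j, t j = N) :
    IsLeast {ℓ : ℕ | SkeletonPath
        {x : Fin (p + q) → ℝ |
          (∀ i, 0 ≤ x i ∧ x i ≤ Fin.addCases (fun i₁ => (s i₁ : ℝ)) (fun j₁ => (t j₁ : ℝ)) i) ∧
          ∑ i, x i = (N : ℝ)}
        (Fin.addCases (fun i₁ => (s i₁ : ℝ)) (fun _ => 0))
        (Fin.addCases (fun _ => 0) (fun j₁ => (t j₁ : ℝ))) ℓ}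
      (p + q - sSup {m : ℕ | SameSumPartition s t m}) := by
  classical
  show IsLeast {ℓ : ℕ | SkeletonPath (Pset (uvec s t) (N : ℝ)) (avec s q) (bvec p t) ℓ}
      (p + q - sSup {m : ℕ | SameSumPartition s t m})
  by_cases hp : p = 0
  · subst hp
    have hN : N = 0 := by simpa using hsN.symm
    have hq : q = 0 := by
      by_contra hq
      have hpos : 0 < ∑ j, t j :=
        Finset.sum_pos (fun j _ => ht j) ⟨⟨0, Nat.pos_of_ne_zero hq⟩, Finset.mem_univ _⟩
      rw [htN, hN] at hpos
      exact lt_irrefl 0 hpos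
    subst hq
    have hSet : {m : ℕ | SameSumPartition s t m} = {0} := by
      ext m
      simp only [Set.mem_setOf_eq, Set.mem_singleton_iff]
      constructor
      · rintro ⟨σ0, τ0, hσ0, _, _⟩
        have := Fintype.card_le_of_surjective σ0 hσ0
        simp at this
        omega
      · rintro rfl
        exact ⟨Fin.elim0, Fin.elim0, fun l => l.elim0, fun l => l.elim0, fun l => l.elim0⟩
    rw [hSet, csSup_singleton]
    have hab : avec s 0 = bvec 0 t := by
      funext k
      exact absurd k.isLt (by omega)
    constructor
    · show SkeletonPath (Pset (uvec s t) (N : ℝ)) (avec s 0) (bvec 0 t) (0 + 0 - 0)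
      have hmem : avec s 0 ∈ (Pset (uvec s t) (N : ℝ)).extremePoints ℝ :=
        mem_extremePoints_of_boundary (avec_mem hsN) (fun k1 => absurd k1.isLt (by omega))
      rw [← hab]
      exact skeletonPath_zero hmem
    · intro ℓ _
      simp
  · have hq : q ≠ 0 := by
      intro hq
      subst hq
      have hN : N = 0 := by simpa using htN.symm
      have hpos : 0 < ∑ i, s i :=
        Finset.sum_pos (fun i _ => hs i) ⟨⟨0, Nat.pos_of_ne_zero hp⟩, Finset.mem_univ _⟩
      rw [hsN, hN] at hpos
      exact lt_irrefl 0 hpos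
    set S := {m : ℕ | SameSumPartition s t m} with hSdef
    have hbdd : BddAbove S := by
      refine ⟨p, ?_⟩
      rintro m ⟨σ0, τ0, hσ0, _, _⟩
      simpa using Fintype.card_le_of_surjective σ0 hσ0
    have h1S : 1 ∈ S := by
      refine ⟨fun _ => 0, fun _ => 0, ?_, ?_, ?_⟩
      · intro l
        exact ⟨⟨0, Nat.pos_of_ne_zero hp⟩, Subsingleton.elim _ _⟩
      · intro l
        exact ⟨⟨0, Nat.pos_of_ne_zero hq⟩, Subsingleton.elim _ _⟩
      · intro l
        rw [Finset.filter_true_of_mem (fun _ _ => Subsingleton.elim _ _),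
          Finset.filter_true_of_mem (fun _ _ => Subsingleton.elim _ _), hsN, htN]
    have hMS : sSup S ∈ S := Nat.sSup_mem ⟨1, h1S⟩ hbdd
    obtain ⟨σ, τ, hσ, hτ, hsum⟩ := hMS
    obtain ⟨L, hL, hpath⟩ := upper_path hs ht hsN htN (sSup S) σ τ hσ hτ hsum
    have hLB : ∀ ℓ ∈ {ℓ : ℕ | SkeletonPath (Pset (uvec s t) (N : ℝ)) (avec s q) (bvec p t) ℓ},
        p + q - sSup S ≤ ℓ := by
      intro ℓ hℓ
      obtain ⟨c, hcS, hc⟩ := lower_bound hs ht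
        (by have := Nat.pos_of_ne_zero hp; omega) hℓ
      have hcM : c ≤ sSup S := le_csSup hbdd hcS
      omega
    have hLeq : L = p + q - sSup S := by
      have := hLB L hpath
      omega
    exact ⟨hLeq ▸ hpath, hLB⟩


end Assembly

end PaperBox
end
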